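/- arXiv:1604.01922 — 11 statements merged into one kernel-verified Lean document; each statement's English description precedes it below -/
import Mathlib

section
/- Let G = K ⋊ H be a semidirect product where H is an abelian p-group and K is a p'-group (i.e., p does not divide |K|). If I is a subgroup of H and g ∈ G is such that gIg⁻¹ ≤ H, then gIg⁻¹ = I. That is, I is the only G-conjugate of I contained in H. -/
open scoped Pointwise


/-- In a semidirect product `G = K ⋊ H` with `H` an abelian `p`-group and `K` a `p'`-group,
any `G`-conjugate of a subgroup `I ≤ H` landing inside `H` equals `I`. -/
theorem stmt0 {G : Type*} [Group G] [Finite G] (p : ℕ) [Fact p.Prime]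
    (K H : Subgroup G) (hKn : K.Normal) (hdisj : K ⊓ H = ⊥) (hsup : K ⊔ H = ⊤)
    (hHp : IsPGroup p H) (hHab : ∀ a ∈ H, ∀ b ∈ H, a * b = b * a)
    (hK' : ¬ p ∣ Nat.card K)
    (I : Subgroup G) (hIH : I ≤ H) (g : G)
    (hg : I.map (MulAut.conj g).toMonoidHom ≤ H) :
    I.map (MulAut.conj g).toMonoidHom = I := by
  have hgmem : g ∈ (K : Set G) * (H : Set G) := by
    rw [← Subgroup.normal_mul K H, hsup]; trivial
  obtain ⟨k, hk, h, hh, rfl⟩ := hgmem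
  have key : ∀ x ∈ I, (k * h) * x * (k * h)⁻¹ = x := by
    intro x hx
    have hxH : x ∈ H := hIH hx
    have hcomm : h * x * h⁻¹ = x := by
      rw [hHab h hh x hxH]; group
    have heq : (k * h) * x * (k * h)⁻¹ = k * x * k⁻¹ := by
      rw [mul_inv_rev, show k * h * x * (h⁻¹ * k⁻¹) = k * (h * x * h⁻¹) * k⁻¹ by group, hcomm]
    have hmemH : k * x * k⁻¹ ∈ H := by
      have hmem : (MulAut.conj (k * h)).toMonoidHom x ∈ I.map (MulAut.conj (k * h)).toMonoidHom :=
        Subgroup.mem_map_of_mem _ hx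
      have := hg hmem
      simp only [MulEquiv.coe_toMonoidHom, MulAut.conj_apply] at this
      rwa [heq] at this
    have hcommK : k * x * k⁻¹ * x⁻¹ ∈ K := by
      have : x * k⁻¹ * x⁻¹ ∈ K := (hKn.conj_mem _ (inv_mem hk) x)
      have := mul_mem hk this
      simpa [mul_assoc] using this
    have hcommH : k * x * k⁻¹ * x⁻¹ ∈ H := mul_mem hmemH (inv_mem hxH)
    have : k * x * k⁻¹ * x⁻¹ ∈ K ⊓ H := ⟨hcommK, hcommH⟩
    rw [hdisj, Subgroup.mem_bot] at this
    rw [heq]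
    have := mul_eq_one_iff_eq_inv.mp this
    rw [this]; group
  ext y
  simp only [Subgroup.mem_map, MulEquiv.coe_toMonoidHom, MulAut.conj_apply]
  constructor
  · rintro ⟨x, hx, rfl⟩
    rwa [show k * h * x * (k * h)⁻¹ = x from key x hx]
  · intro hy
    exact ⟨y, hy, key y hy⟩
end

section
/- Let G = K ⋊ H be a semidirect product where H is an abelian p-group and K is a p'-group. Then every Sylow p-subgroup of G is of the form kHk⁻¹ for some k ∈ K, and the number of Sylow p-subgroups of G equals |K| / |C_K(H)|. -/
open scoped Pointwise


/-- In a semidirect product `G = K ⋊ H` with `H` an abelian `p`-group and `K` a `p'`-group,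
every Sylow `p`-subgroup of `G` is a `K`-conjugate of `H`, and the number of Sylow
`p`-subgroups equals `|K| / |C_K(H)|`. -/
theorem stmt1 {G : Type*} [Group G] [Finite G] (p : ℕ) [Fact p.Prime]
    (K H : Subgroup G) (hKn : K.Normal) (hdisj : K ⊓ H = ⊥) (hsup : K ⊔ H = ⊤)
    (hHp : IsPGroup p H) (hHab : ∀ a ∈ H, ∀ b ∈ H, a * b = b * a)
    (hK' : ¬ p ∣ Nat.card K) :
    (∀ S : Sylow p G, ∃ k ∈ K, (S : Subgroup G) = H.map (MulAut.conj k).toMonoidHom) ∧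
    Nat.card (Sylow p G) = Nat.card K / Nat.card ↥(Subgroup.centralizer (H : Set G) ⊓ K) := by
  classical
  -- K and H are complements
  have hmul : (K : Set G) * (H : Set G) = (Set.univ : Set G) := by
    rw [← Subgroup.normal_mul, hsup, Subgroup.coe_top]
  have hcomp : Subgroup.IsComplement' K H :=
    Subgroup.isComplement'_of_disjoint_and_mul_eq_univ (disjoint_iff.mpr hdisj) hmul
  have hcard : Nat.card K * Nat.card H = Nat.card G := hcomp.card_mul
  have hHpos : 0 < Nat.card H := Nat.card_pos
  have hKpos : 0 < Nat.card K := Nat.card_pos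
  -- index of H is |K|
  have hHindex : H.index = Nat.card K := by
    have := Subgroup.card_mul_index H
    rw [← hcard, mul_comm (Nat.card K)] at this
    exact Nat.eq_of_mul_eq_mul_left hHpos this
  -- decomposition of any g ∈ G as k * h
  have hdec : ∀ g : G, ∃ k ∈ K, ∃ h ∈ H, g = k * h := by
    intro g
    have : g ∈ (K : Set G) * (H : Set G) := by rw [hmul]; trivial
    obtain ⟨k, hk, h, hh, hg⟩ := this
    exact ⟨k, hk, h, hh, hg.symm⟩
  -- elements of K ⊓ H are trivial
  have htriv : ∀ x : G, x ∈ K → x ∈ H → x = 1 := by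
    intro x hxK hxH
    have : x ∈ K ⊓ H := ⟨hxK, hxH⟩
    rwa [hdisj, Subgroup.mem_bot] at this
  -- H is a Sylow p-subgroup
  have hmax : ∀ {Q : Subgroup G}, IsPGroup p Q → H ≤ Q → Q = H := by
    intro Q hQ hHQ
    have h1 : H.relIndex Q ∣ Nat.card Q := Subgroup.index_dvd_card (H.subgroupOf Q)
    obtain ⟨n, hn⟩ := hQ.exists_card_eq
    rw [hn] at h1
    obtain ⟨m, hm, hpow⟩ := (Nat.dvd_prime_pow (Fact.out : p.Prime)).mp h1
    have h2 : H.relIndex Q ∣ Nat.card K := by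
      rw [← hHindex]
      exact Subgroup.relIndex_dvd_index_of_le hHQ
    have hm0 : m = 0 := by
      by_contra hm0
      exact hK' (dvd_trans (dvd_pow_self p hm0) (hpow ▸ h2))
    have : H.relIndex Q = 1 := by rw [hpow, hm0, pow_zero]
    exact le_antisymm (Subgroup.relIndex_eq_one.mp this) hHQ
  let HS : Sylow p G := ⟨H, hHp, fun hQ hHQ => hmax hQ hHQ⟩
  -- conjugation by an element of H fixes H
  have hconjH : ∀ h ∈ H, H.map (MulAut.conj h).toMonoidHom = H := by
    intro h hh
    apply le_antisymm
    · rintro x ⟨y, hy, rfl⟩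
      simpa using H.mul_mem (H.mul_mem hh hy) (H.inv_mem hh)
    · intro x hx
      refine ⟨h⁻¹ * x * h, H.mul_mem (H.mul_mem (H.inv_mem hh) hx) hh, ?_⟩
      simp [mul_assoc]
  have hcent_norm : Subgroup.centralizer (H : Set G) ≤ (Subgroup.normalizer (H : Set G)) := by
    intro c hc
    rw [Subgroup.mem_normalizer_iff]
    intro x
    constructor
    · intro hx
      have h1 := Subgroup.mem_centralizer_iff.mp hc x hx
      have h2 : c * x * c⁻¹ = x := by rw [← h1]; group
      rw [h2]; exact hx
    · intro hx
      have h1 := Subgroup.mem_centralizer_iff.mp hc _ hx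
      have h2 : c * x = c * (c * x * c⁻¹) := by rw [← h1]; group
      have h3 : x = c * x * c⁻¹ := mul_left_cancel h2
      rw [h3]; exact hx
  constructor
  · -- every Sylow is a K-conjugate of H
    intro S
    obtain ⟨g, hg⟩ := MulAction.exists_smul_eq G HS S
    obtain ⟨k, hk, h, hh, rfl⟩ := hdec g
    refine ⟨k, hk, ?_⟩
    have hsmul : (h • HS : Sylow p G) = HS :=
      (HS.smul_eq_iff_mem_normalizer).mpr (Subgroup.le_normalizer hh)
    have hkS : (k • HS : Sylow p G) = S := by
      rw [← hg, mul_smul, hsmul]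
    rw [← hkS]
    rfl
  · -- counting
    set C := Subgroup.centralizer (H : Set G) ⊓ K with hC
    have hCcount : Nat.card C * Nat.card H = Nat.card (Subgroup.normalizer (H : Set G)) := by
      rw [← Nat.card_prod]
      apply Nat.card_eq_of_bijective
        (fun ch : C × H => (⟨(ch.1 : G) * (ch.2 : G), by
          apply (Subgroup.normalizer (H : Set G)).mul_mem
          · exact hcent_norm ch.1.2.1
          · exact Subgroup.le_normalizer ch.2.2⟩ : (Subgroup.normalizer (H : Set G))))
      constructor
      · rintro ⟨⟨c1, hc1⟩, ⟨h1, hh1⟩⟩ ⟨⟨c2, hc2⟩, ⟨h2, hh2⟩⟩ heq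
        have heq' : c1 * h1 = c2 * h2 := congrArg Subtype.val heq
        have hkey : c2⁻¹ * c1 = h2 * h1⁻¹ := by
          have h5 : c2 * (c2⁻¹ * c1) * h1 = c2 * (h2 * h1⁻¹) * h1 := by
            have e1 : c2 * (c2⁻¹ * c1) * h1 = c1 * h1 := by group
            have e2 : c2 * (h2 * h1⁻¹) * h1 = c2 * h2 := by group
            rw [e1, e2, heq']
          exact mul_left_cancel (mul_right_cancel h5)
        have hmem : c2⁻¹ * c1 = 1 := htriv _ (K.mul_mem (K.inv_mem hc2.2) hc1.2)
          (hkey ▸ H.mul_mem hh2 (H.inv_mem hh1))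
        have hc : c1 = c2 := by
          have := mul_eq_one_iff_eq_inv.mp hmem
          simpa using this.symm
        have hh : h1 = h2 := by
          rw [hc] at heq'
          exact mul_left_cancel heq'
        simp [hc, hh]
      · rintro ⟨g, hg⟩
        obtain ⟨k, hk, h, hh, rfl⟩ := hdec g
        have hkN : k ∈ (Subgroup.normalizer (H : Set G)) := by
          have : (k * h) * h⁻¹ ∈ (Subgroup.normalizer (H : Set G)) :=
            (Subgroup.normalizer (H : Set G)).mul_mem hg (Subgroup.le_normalizer (H.inv_mem hh))
          simpa using this
        have hkC : k ∈ C := by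
          refine ⟨Subgroup.mem_centralizer_iff.mpr fun x hx => ?_, hk⟩
          -- show x * k = k * x
          have h1 : k * x * k⁻¹ ∈ H := (Subgroup.mem_normalizer_iff.mp hkN x).mp hx
          have h2 : k * x * k⁻¹ * x⁻¹ ∈ K := by
            have : x * k⁻¹ * x⁻¹ ∈ K := hKn.conj_mem _ (K.inv_mem hk) x
            have := K.mul_mem hk this
            simpa [mul_assoc] using this
          have h3 : k * x * k⁻¹ * x⁻¹ ∈ H := H.mul_mem h1 (H.inv_mem hx)
          have h4 : k * x * k⁻¹ * x⁻¹ = 1 := htriv _ h2 h3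
          have h5 : k * x * k⁻¹ = x := by
            have := mul_eq_one_iff_eq_inv.mp h4
            rwa [inv_inv] at this
          show x * k = k * x
          nth_rewrite 1 [← h5]
          group
        exact ⟨(⟨k, hkC⟩, ⟨h, hh⟩), rfl⟩
    have hcount : Nat.card (Sylow p G) = (Subgroup.normalizer (H : Set G)).index :=
      Sylow.card_eq_index_normalizer HS
    have hNindex : Nat.card (Subgroup.normalizer (H : Set G)) * (Subgroup.normalizer (H : Set G)).index = Nat.card G :=
      Subgroup.card_mul_index (Subgroup.normalizer (H : Set G))
    rw [← hCcount, ← hcard] at hNindex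
    -- (|C| * |H|) * index = |K| * |H|
    have hCpos : 0 < Nat.card C := Nat.card_pos
    have key : Nat.card C * (Subgroup.normalizer (H : Set G)).index = Nat.card K := by
      have : Nat.card H * (Nat.card C * (Subgroup.normalizer (H : Set G)).index) = Nat.card H * Nat.card K := by
        ring_nf
        ring_nf at hNindex
        linarith [hNindex]
      exact Nat.eq_of_mul_eq_mul_left hHpos this
    rw [hcount, ← key, Nat.mul_div_cancel_left _ hCpos]
end

section
/- Let G = K ⋊ H be a semidirect product where H is an abelian p-group and K is a p'-group, and let I ≤ H. Then the number of Sylow p-subgroups of G containing I equals |C_K(I)| / |C_K(H)|. -/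
open Pointwise

private lemma mem_conj_smul {G : Type*} [Group G] (H : Subgroup G) (k x : G) :
    x ∈ MulAut.conj k • H ↔ k⁻¹ * x * k ∈ H := by
  rw [Subgroup.mem_pointwise_smul_iff_inv_smul_mem]
  simp [MulAut.smul_def]

private lemma conj_mem_iff_comm {G : Type*} [Group G] {K H : Subgroup G}
    (hKn : K.Normal) (hdisj : K ⊓ H = ⊥) {k h : G} (hk : k ∈ K) (hh : h ∈ H) :
    k⁻¹ * h * k ∈ H ↔ k * h = h * k := by
  constructor
  · intro hmem
    have ha : k⁻¹ * (h * k * h⁻¹) ∈ K := mul_mem (inv_mem hk) (hKn.conj_mem k hk h)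
    have hb : k⁻¹ * (h * k * h⁻¹) ∈ H := by
      have he : k⁻¹ * (h * k * h⁻¹) = (k⁻¹ * h * k) * h⁻¹ := by group
      rw [he]; exact mul_mem hmem (inv_mem hh)
    have h1 : k⁻¹ * (h * k * h⁻¹) = 1 := by
      have hm : k⁻¹ * (h * k * h⁻¹) ∈ K ⊓ H := ⟨ha, hb⟩
      rw [hdisj] at hm; simpa using hm
    have h2 : k = h * k * h⁻¹ := inv_mul_eq_one.mp h1
    calc k * h = (h * k * h⁻¹) * h := by rw [← h2]
      _ = h * k := by group
  · intro hc
    have : k⁻¹ * h * k = h := by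
      rw [mul_assoc, ← hc, ← mul_assoc, inv_mul_cancel, one_mul]
    rw [this]; exact hh

private lemma conj_smul_of_centralizer {G : Type*} [Group G] (H : Subgroup G) {c : G}
    (hc : c ∈ Subgroup.centralizer (H : Set G)) : MulAut.conj c • H = H := by
  rw [Subgroup.mem_centralizer_iff] at hc
  ext x
  rw [mem_conj_smul]
  constructor
  · intro hx
    have h0 := hc _ hx
    have h1 : (c⁻¹ * x * c) * c = x * c := by rw [h0]; group
    have hx' : c⁻¹ * x * c = x := mul_right_cancel h1
    rwa [hx'] at hx
  · intro hx
    have h0 := hc _ hx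
    have hx' : c⁻¹ * x * c = x := by
      rw [mul_assoc, h0, ← mul_assoc, inv_mul_cancel, one_mul]
    rw [hx']; exact hx

/-- In a semidirect product `G = K ⋊ H` with `H` an abelian `p`-group and `K` a `p'`-group,
for a subgroup `I ≤ H` the number of Sylow `p`-subgroups of `G` containing `I`
equals `|C_K(I)| / |C_K(H)|`. -/
theorem stmt2 {G : Type*} [Group G] [Finite G] (p : ℕ) [Fact p.Prime]
    (K H : Subgroup G) (hKn : K.Normal) (hdisj : K ⊓ H = ⊥) (hsup : K ⊔ H = ⊤)
    (hHp : IsPGroup p H) (hHab : ∀ a ∈ H, ∀ b ∈ H, a * b = b * a)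
    (hK' : ¬ p ∣ Nat.card K)
    (I : Subgroup G) (hIH : I ≤ H) :
    Nat.card {S : Sylow p G // I ≤ (S : Subgroup G)} =
      Nat.card ↥(Subgroup.centralizer (I : Set G) ⊓ K) /
        Nat.card ↥(Subgroup.centralizer (H : Set G) ⊓ K) := by
  classical
  haveI := hKn
  set CI := Subgroup.centralizer (I : Set G) ⊓ K with hCIdef
  set CH := Subgroup.centralizer (H : Set G) ⊓ K with hCHdef
  have hCHI : CH ≤ CI :=
    inf_le_inf_right K (Subgroup.centralizer_le (fun x hx => hIH hx))
  -- H is a Sylow p-subgroup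
  obtain ⟨S₀, hle⟩ := hHp.exists_le_sylow
  have hcopr : (Nat.card K).Coprime p :=
    ((Nat.Prime.coprime_iff_not_dvd (Fact.out : p.Prime)).mpr hK').symm
  have hSK : ∀ x : G, x ∈ (S₀ : Subgroup G) → x ∈ K → x = 1 := by
    intro x hxS hxK
    obtain ⟨n, hn⟩ := S₀.isPGroup' ⟨x, hxS⟩
    have hxp : x ^ (p ^ n) = 1 := by
      have := congrArg (Subtype.val) hn
      simpa using this
    have h1 : orderOf x ∣ p ^ n := orderOf_dvd_of_pow_eq_one hxp
    have h2 : orderOf x ∣ Nat.card K := Subgroup.orderOf_dvd_natCard K hxK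
    have : orderOf x = 1 :=
      Nat.eq_one_of_dvd_coprimes (hcopr.pow_right n).symm h1 h2
    exact orderOf_eq_one_iff.mp this
  -- card (G ⧸ K) = card H
  have hquot : Nat.card (G ⧸ K) = Nat.card H := by
    refine (Nat.card_congr (Equiv.ofBijective
      (fun h : H => QuotientGroup.mk (h : G)) ⟨?_, ?_⟩)).symm
    · intro a b hab
      have : (a : G)⁻¹ * b ∈ K := QuotientGroup.leftRel_apply.mp (Quotient.exact hab)
      have hH : (a : G)⁻¹ * b ∈ H := mul_mem (inv_mem a.2) b.2
      have : (a : G)⁻¹ * b ∈ K ⊓ H := ⟨this, hH⟩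
      rw [hdisj] at this
      have : (a : G)⁻¹ * (b : G) = 1 := by simpa using this
      exact Subtype.ext (inv_mul_eq_one.mp this)
    · intro q
      obtain ⟨g, rfl⟩ := QuotientGroup.mk_surjective q
      have hg : g ∈ (K ⊔ H : Subgroup G) := hsup ▸ Subgroup.mem_top g
      rw [← SetLike.mem_coe, Subgroup.normal_mul] at hg
      obtain ⟨k, hk, h, hh, rfl⟩ := hg
      refine ⟨⟨h, hh⟩, ?_⟩
      apply QuotientGroup.eq.mpr
      have : h⁻¹ * (k * h) = h⁻¹ * k * h := by group
      rw [this]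
      exact hKn.conj_mem' k hk h
  have hS₀H : (S₀ : Subgroup G) = H := by
    refine (Subgroup.eq_of_le_of_card_ge hle ?_).symm
    have hinj : Function.Injective
        (fun x : (S₀ : Subgroup G) => (QuotientGroup.mk (x : G) : G ⧸ K)) := by
      intro a b hab
      have hm : (a : G)⁻¹ * b ∈ K := QuotientGroup.leftRel_apply.mp (Quotient.exact hab)
      have hs : (a : G)⁻¹ * b ∈ (S₀ : Subgroup G) := mul_mem (inv_mem a.2) b.2
      have := hSK _ hs hm
      exact Subtype.ext (inv_mul_eq_one.mp this)
    calc Nat.card (S₀ : Subgroup G) ≤ Nat.card (G ⧸ K) := Nat.card_le_card_of_injective _ hinj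
      _ = Nat.card H := hquot
  -- the map from CI to Sylows containing I
  have hmemI : ∀ k : CI, (k : G) ∈ Subgroup.centralizer (I : Set G) := fun k => k.2.1
  have hmemK : ∀ k : CI, (k : G) ∈ K := fun k => k.2.2
  have hfprop : ∀ k : CI, I ≤ (((k : G) • S₀ : Sylow p G) : Subgroup G) := by
    intro k i hi
    have : i ∈ MulAut.conj (k : G) • (S₀ : Subgroup G) := by
      rw [mem_conj_smul, hS₀H]
      have hc := (Subgroup.mem_centralizer_iff.mp (hmemI k)) i hi
      exact (conj_mem_iff_comm hKn hdisj (hmemK k) (hIH hi)).mpr hc.symm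
    exact this
  let f : CI → {S : Sylow p G // I ≤ (S : Subgroup G)} :=
    fun k => ⟨(k : G) • S₀, hfprop k⟩
  let CH' := CH.subgroupOf CI
  have hwd : ∀ a b : CI, (QuotientGroup.leftRel CH').r a b → f a = f b := by
    intro a b hab
    rw [QuotientGroup.leftRel_apply] at hab
    have hc : ((a⁻¹ * b : CI) : G) ∈ CH := hab
    apply Subtype.ext
    show (a : G) • S₀ = (b : G) • S₀
    have h1 : ((a⁻¹ * b : CI) : G) • S₀ = S₀ := by
      apply Sylow.ext
      rw [Sylow.coe_subgroup_smul, hS₀H]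
      exact conj_smul_of_centralizer H hc.1
    calc (a : G) • S₀ = (a : G) • (((a⁻¹ * b : CI) : G) • S₀) := by rw [h1]
      _ = (b : G) • S₀ := by
          rw [← mul_smul]
          congr 1
          push_cast
          group
  let F : CI ⧸ CH' → {S : Sylow p G // I ≤ (S : Subgroup G)} :=
    Quotient.lift f hwd
  have hFbij : Function.Bijective F := by
    constructor
    · intro qa qb
      induction qa using Quotient.inductionOn with | h a =>
      induction qb using Quotient.inductionOn with | h b =>
      intro hab
      have hab' : (a : G) • S₀ = (b : G) • S₀ := congrArg Subtype.val hab
      refine Quotient.sound (QuotientGroup.leftRel_apply.mpr ?_)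
      have hc : ((a⁻¹ * b : CI) : G) • S₀ = S₀ := by
        have : ((a : G)⁻¹ * b) • S₀ = (a : G)⁻¹ • ((b : G) • S₀) := mul_smul _ _ _
        push_cast
        rw [this, ← hab', ← mul_smul, inv_mul_cancel, one_smul]
      have hsub : MulAut.conj ((a⁻¹ * b : CI) : G) • (H : Subgroup G) = H := by
        rw [← hS₀H]
        exact congrArg Sylow.toSubgroup hc
      have hcen : ((a⁻¹ * b : CI) : G) ∈ Subgroup.centralizer (H : Set G) := by
        rw [Subgroup.mem_centralizer_iff]
        intro h hh
        have : h ∈ MulAut.conj ((a⁻¹ * b : CI) : G) • (H : Subgroup G) := hsub.symm ▸ hh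
        rw [mem_conj_smul] at this
        exact ((conj_mem_iff_comm hKn hdisj (hmemK _) hh).mp this).symm
      exact (⟨hcen, hmemK _⟩ : ((a⁻¹ * b : CI) : G) ∈ CH)
    · rintro ⟨S, hIS⟩
      haveI : Finite (Sylow p G) := inferInstance
      obtain ⟨g, hg⟩ := MulAction.exists_smul_eq G S₀ S
      have hgmem : g ∈ (K ⊔ H : Subgroup G) := hsup ▸ Subgroup.mem_top g
      rw [← SetLike.mem_coe, Subgroup.normal_mul] at hgmem
      obtain ⟨k, hk, h, hh, rfl⟩ := hgmem
      have hhS : h • S₀ = S₀ := by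
        apply Sylow.ext
        rw [Sylow.coe_subgroup_smul, hS₀H]
        apply conj_smul_of_centralizer
        rw [Subgroup.mem_centralizer_iff]
        intro b hb
        exact hHab b hb h hh
      have hkS : k • S₀ = S := by
        rw [← hg, mul_smul, hhS]
      have hkcen : k ∈ Subgroup.centralizer (I : Set G) := by
        rw [Subgroup.mem_centralizer_iff]
        intro i hi
        have hiS : i ∈ (S : Subgroup G) := hIS hi
        have : i ∈ MulAut.conj k • (S₀ : Subgroup G) := by
          rw [← Sylow.coe_subgroup_smul, hkS]; exact hiS
        rw [mem_conj_smul, hS₀H] at this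
        exact ((conj_mem_iff_comm hKn hdisj hk (hIH hi)).mp this).symm
      exact ⟨Quotient.mk _ ⟨k, ⟨hkcen, hk⟩⟩, Subtype.ext hkS⟩
  have h1 : Nat.card {S : Sylow p G // I ≤ (S : Subgroup G)} = Nat.card (CI ⧸ CH') :=
    (Nat.card_congr (Equiv.ofBijective F hFbij)).symm
  have h2 : Nat.card CI = Nat.card (CI ⧸ CH') * Nat.card CH' :=
    Subgroup.card_eq_card_quotient_mul_card_subgroup CH'
  have h3 : Nat.card CH' = Nat.card CH :=
    Nat.card_congr (Subgroup.subgroupOfEquivOfLe hCHI).toEquiv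
  have hpos : 0 < Nat.card CH := Nat.card_pos
  rw [h1, h2, h3, Nat.mul_div_cancel _ hpos]
end

section
/- Let G = K ⋊ H be a semidirect product where H is an abelian p-group and K is a p'-group, and let N be a normal subgroup of K that is invariant under the conjugation action of H. Then the centralizer of the image of H in K/N equals the image of C_K(H), i.e., C_{K/N}(H) = C_K(H)·N / N. -/
open MulAction in
private lemma aux_fixed {G : Type*} [Group G] [Finite G] (p : ℕ) [Fact p.Prime]
    (H N : Subgroup G) (hNn : N.Normal) (hHp : IsPGroup p H)
    (hcop : ¬ p ∣ Nat.card N) (x : G)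
    (hx : ∀ h ∈ H, h * x * h⁻¹ * x⁻¹ ∈ N) :
    ∃ y : G, (∀ h ∈ H, h * y = y * h) ∧ x⁻¹ * y ∈ N := by
  let S := {y : G // x⁻¹ * y ∈ N}
  have hact : ∀ (h : H) (y : S), x⁻¹ * ((h : G) * (y : G) * (h : G)⁻¹) ∈ N := by
    rintro ⟨h, hh⟩ ⟨y, hy⟩
    have h1 : x⁻¹ * (h * x * h⁻¹ * x⁻¹) * x ∈ N := by
      simpa using hNn.conj_mem _ (hx h hh) x⁻¹
    have h2 : h * (x⁻¹ * y) * h⁻¹ ∈ N := hNn.conj_mem _ hy h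
    have : (x⁻¹ * (h * x * h⁻¹ * x⁻¹) * x) * (h * (x⁻¹ * y) * h⁻¹) =
        x⁻¹ * (h * y * h⁻¹) := by group
    simpa [this] using N.mul_mem h1 h2
  letI : MulAction H S :=
    { smul := fun h y => ⟨(h : G) * (y : G) * (h : G)⁻¹, hact h y⟩
      one_smul := fun y => Subtype.ext (by
        show ((1 : H) : G) * (y : G) * ((1 : H) : G)⁻¹ = (y : G); simp)
      mul_smul := fun g h y => Subtype.ext (by
        show ((g * h : H) : G) * (y : G) * ((g * h : H) : G)⁻¹ =
          (g : G) * ((h : G) * (y : G) * (h : G)⁻¹) * (g : G)⁻¹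
        push_cast
        group) }
  have hcard : Nat.card S = Nat.card N := by
    refine Nat.card_congr ⟨fun y => ⟨x⁻¹ * (y : G), y.2⟩, fun n => ⟨x * (n : G), by simp⟩,
      fun y => by ext; simp, fun n => by ext; simp⟩
  obtain ⟨y, hy⟩ := hHp.nonempty_fixed_point_of_prime_not_dvd_card S (by rwa [hcard])
  refine ⟨(y : G), fun h hh => ?_, y.2⟩
  have := hy ⟨h, hh⟩
  have h1 : h * (y : G) * h⁻¹ = (y : G) := congrArg Subtype.val this
  calc h * (y : G) = (h * (y : G) * h⁻¹) * h := by group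
  _ = (y : G) * h := by rw [h1]

/-- In a semidirect product `G = K ⋊ H` with `H` an abelian `p`-group and `K` a `p'`-group,
if `N ≤ K` is a normal (in `G`, i.e. normal in `K` and `H`-invariant) subgroup, then the
centralizer of the image of `H` inside the image of `K` in `G/N` is the image of
`C_K(H)`, i.e. `C_{K/N}(H) = C_K(H)·N/N`. -/
theorem stmt3 {G : Type*} [Group G] [Finite G] (p : ℕ) [Fact p.Prime]
    (K H : Subgroup G) (hKn : K.Normal) (hdisj : K ⊓ H = ⊥) (hsup : K ⊔ H = ⊤)
    (hHp : IsPGroup p H) (hHab : ∀ a ∈ H, ∀ b ∈ H, a * b = b * a)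
    (hK' : ¬ p ∣ Nat.card K)
    (N : Subgroup G) (hNK : N ≤ K) (hNn : N.Normal) :
    Subgroup.centralizer ((H.map (QuotientGroup.mk' N) : Subgroup (G ⧸ N)) : Set (G ⧸ N)) ⊓
        K.map (QuotientGroup.mk' N) =
      (Subgroup.centralizer (H : Set G) ⊓ K).map (QuotientGroup.mk' N) := by
  have hcopN : ¬ p ∣ Nat.card N := fun hd => hK' (hd.trans (Subgroup.card_dvd_of_le hNK))
  ext g
  simp only [Subgroup.mem_inf, Subgroup.mem_map, Subgroup.mem_centralizer_iff]
  constructor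
  · rintro ⟨hc, x, hxK, rfl⟩
    have hx : ∀ h ∈ H, h * x * h⁻¹ * x⁻¹ ∈ N := by
      intro h hh
      have := hc (QuotientGroup.mk' N h) ⟨h, hh, rfl⟩
      rw [← QuotientGroup.eq_one_iff]
      simp only [QuotientGroup.mk'_apply] at this ⊢
      rw [QuotientGroup.mk_mul, QuotientGroup.mk_mul, QuotientGroup.mk_mul, QuotientGroup.mk_inv,
        QuotientGroup.mk_inv, this]
      group
    obtain ⟨y, hyc, hyN⟩ := aux_fixed p H N hNn hHp hcopN x hx
    refine ⟨y, ⟨fun h hh => hyc h hh, ?_⟩, ?_⟩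
    · have : y = x * (x⁻¹ * y) := by group
      rw [this]; exact K.mul_mem hxK (hNK hyN)
    · simp only [QuotientGroup.mk'_apply]
      exact (QuotientGroup.eq.mpr hyN).symm
  · rintro ⟨y, ⟨hyc, hyK⟩, rfl⟩
    refine ⟨?_, y, hyK, rfl⟩
    rintro _ ⟨h, hh, rfl⟩
    simp only [QuotientGroup.mk'_apply, ← QuotientGroup.mk_mul, hyc h hh]
end

section
/- Let G = K ⋊ H with H ≅ (ℤ/p)^r an elementary abelian p-group of rank r acting faithfully on the p'-group K. Then there exist r hyperplanes H₁, …, H_r of H (subgroups of index p) whose intersection is trivial (equivalently, which are linearly independent as elements of the dual space) such that C_K(H_i) strictly contains C_K(H) for each i. -/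
open Subgroup

section Helpers

variable {p : ℕ} [Fact p.Prime]

private lemma pow_congr_zmod {G : Type*} [Group G] {g : G} (hg : g ^ p = 1) {m n : ℕ}
    (h : (m : ZMod p) = (n : ZMod p)) : g ^ m = g ^ n := by
  have hmod : m ≡ n [MOD p] := (ZMod.natCast_eq_natCast_iff _ _ _).mp h
  exact pow_eq_pow_iff_modEq.mpr (hmod.of_dvd (orderOf_dvd_of_pow_eq_one hg))

/-- The set of elements fixed by some index `p` subgroup of `A`. -/
def goodSet (p : ℕ) {A : Type*} [Group A] {K : Type*} [Group K] (φ : A →* MulAut K) : Set K :=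
  {k | ∃ M : Subgroup A, M.index = p ∧ ∀ a ∈ M, φ a k = k}

/-- Restriction of an action to an invariant subgroup. -/
def restrictAut {A K : Type*} [Group A] [Group K] (φ : A →* MulAut K) (N : Subgroup K)
    (h : ∀ a : A, ∀ x ∈ N, φ a x ∈ N) : A →* MulAut N where
  toFun a :=
    { toFun := fun x => ⟨φ a x, h a x x.2⟩
      invFun := fun x => ⟨φ a⁻¹ x, h a⁻¹ x x.2⟩
      left_inv := fun x => Subtype.ext (by
        simp only [map_inv, MulAut.inv_def]
        exact (φ a).symm_apply_apply x)
      right_inv := fun x => Subtype.ext (by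
        simp only [map_inv, MulAut.inv_def]
        exact (φ a).apply_symm_apply x)
      map_mul' := fun x y => Subtype.ext (by simp) }
  map_one' := by ext x; simp
  map_mul' a b := by ext x; simp

@[simp] lemma restrictAut_apply {A K : Type*} [Group A] [Group K] (φ : A →* MulAut K)
    (N : Subgroup K) (h : ∀ a : A, ∀ x ∈ N, φ a x ∈ N) (a : A) (x : N) :
    (restrictAut φ N h a x : K) = φ a x := rfl

/-- Induced action on the quotient by an invariant normal subgroup. -/
def quotAut {A K : Type*} [Group A] [Group K] (φ : A →* MulAut K) (N : Subgroup K) [N.Normal]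
    (h : ∀ a : A, ∀ x ∈ N, φ a x ∈ N) : A →* MulAut (K ⧸ N) where
  toFun a :=
    { toFun := QuotientGroup.map N N (φ a).toMonoidHom (fun x hx => h a x hx)
      invFun := QuotientGroup.map N N (φ a⁻¹).toMonoidHom (fun x hx => h a⁻¹ x hx)
      left_inv := fun y => QuotientGroup.induction_on y fun x => by
        show ((φ a⁻¹ (φ a x) : K) : K ⧸ N) = x
        simp only [map_inv, MulAut.inv_def]
        rw [(φ a).symm_apply_apply]
      right_inv := fun y => QuotientGroup.induction_on y fun x => by
        show ((φ a (φ a⁻¹ x) : K) : K ⧸ N) = x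
        simp only [map_inv, MulAut.inv_def]
        rw [(φ a).apply_symm_apply]
      map_mul' := fun x y => map_mul _ x y }
  map_one' := by
    ext y
    refine QuotientGroup.induction_on y fun x => ?_
    simp
  map_mul' a b := by
    ext y
    refine QuotientGroup.induction_on y fun x => ?_
    simp [map_mul]

@[simp] lemma quotAut_apply {A K : Type*} [Group A] [Group K] (φ : A →* MulAut K)
    (N : Subgroup K) [N.Normal] (h : ∀ a : A, ∀ x ∈ N, φ a x ∈ N) (a : A) (x : K) :
    quotAut φ N h a (x : K ⧸ N) = ((φ a x : K) : K ⧸ N) := rfl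

/-- Coprime lifting of fixed points through a quotient. -/
lemma exists_lift_fixed {A : Type*} [Group A] [Finite A] (hexpA : ∀ a : A, a ^ p = 1)
    {K : Type*} [Group K] [Finite K] (hcop : (Nat.card K).Coprime p)
    (φ : A →* MulAut K) (N : Subgroup K) [N.Normal] (h : ∀ a : A, ∀ x ∈ N, φ a x ∈ N)
    (M : Subgroup A) (y : K ⧸ N) (hy : ∀ a ∈ M, quotAut φ N h a y = y) :
    ∃ x : K, (x : K ⧸ N) = y ∧ ∀ a ∈ M, φ a x = x := by
  haveI hpM : IsPGroup p M := fun g =>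
    ⟨1, by rw [pow_one]; exact Subtype.ext (by simpa using hexpA (g : A))⟩
  let Ω := {z : K // (z : K ⧸ N) = y}
  letI : SMul M Ω := ⟨fun a z => ⟨φ a z.1, by
    have h1 : ((φ (a : A) z.1 : K) : K ⧸ N) = quotAut φ N h a z.1 := rfl
    rw [h1, z.2, hy a a.2]⟩⟩
  letI : MulAction M Ω :=
    { one_smul := fun z => Subtype.ext (by show φ 1 z.1 = z.1; simp)
      mul_smul := fun a b z => Subtype.ext (by
        show φ ((a : A) * b) z.1 = φ (a : A) (φ (b : A) z.1)
        rw [map_mul]; rfl) }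
  have hΩcard : Nat.card Ω = Nat.card N := by
    obtain ⟨x₀, hx₀⟩ := QuotientGroup.mk_surjective y
    refine Nat.card_congr ⟨fun z => ⟨x₀⁻¹ * z.1, QuotientGroup.eq.mp (hx₀.trans z.2.symm)⟩,
      fun n => ⟨x₀ * n.1, by rw [QuotientGroup.mk_mul_of_mem x₀ n.2, hx₀]⟩, ?_, ?_⟩
    · intro z; exact Subtype.ext (by simp)
    · intro n; exact Subtype.ext (by simp)
  have hnd : ¬ p ∣ Nat.card Ω := by
    rw [hΩcard]
    intro hdvd
    have h1 : p ∣ Nat.card K := hdvd.trans (Subgroup.card_subgroup_dvd_card N)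
    have h2 : p ∣ 1 := hcop ▸ Nat.dvd_gcd h1 dvd_rfl
    exact absurd (Nat.le_of_dvd one_pos h2) (by have := (Fact.out : p.Prime).one_lt; omega)
  obtain ⟨z, hz⟩ := hpM.nonempty_fixed_point_of_prime_not_dvd_card Ω hnd
  refine ⟨z.1, z.2, fun a ha => ?_⟩
  have := (MulAction.mem_fixedPoints.mp hz) ⟨a, ha⟩
  exact congrArg Subtype.val this

/-- If an invariant subgroup is generated by good elements, it lies in the closure of the
good elements of the big group. -/
lemma le_closure_good {p : ℕ} {A K : Type*} [Group A] [Group K] (φ : A →* MulAut K)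
    (N : Subgroup K) (h : ∀ a : A, ∀ x ∈ N, φ a x ∈ N)
    (hgen : Subgroup.closure (goodSet p (restrictAut φ N h)) = ⊤) :
    N ≤ Subgroup.closure (goodSet p φ) := by
  intro x hx
  have h1 : (⟨x, hx⟩ : N) ∈ Subgroup.closure (goodSet p (restrictAut φ N h)) := by
    rw [hgen]; trivial
  have h2 : x ∈ Subgroup.map N.subtype (Subgroup.closure (goodSet p (restrictAut φ N h))) :=
    ⟨_, h1, rfl⟩
  rw [MonoidHom.map_closure] at h2
  refine Subgroup.closure_mono ?_ h2
  rintro _ ⟨y, ⟨M, hM, hfix⟩, rfl⟩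
  exact ⟨M, hM, fun a ha => congrArg Subtype.val (hfix a ha)⟩

end Helpers
section L1

variable {p : ℕ} [Fact p.Prime]

lemma closure_goodSet_eq_top_of_pgroup {A : Type*} [CommGroup A] [Finite A]
    (hexpA : ∀ a : A, a ^ p = 1) (hhyp : ∃ M : Subgroup A, M.index = p)
    (q : ℕ) (hq : q.Prime) (hqp : q ≠ p) :
    ∀ n : ℕ, ∀ (Q : Type u) [Group Q] [Finite Q], Nat.card Q ≤ n →
      IsPGroup q Q → ∀ φ : A →* MulAut Q, Subgroup.closure (goodSet p φ) = ⊤ := by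
  intro n
  induction n with
  | zero =>
    intro Q _ _ hcard _ φ
    have := Nat.card_pos (α := Q)
    omega
  | succ n ih =>
    intro Q _ _ hcard hQq φ
    haveI : Fact q.Prime := ⟨hq⟩
    haveI : NeZero p := ⟨(Fact.out : p.Prime).ne_zero⟩
    obtain ⟨m, hm⟩ := IsPGroup.iff_card.mp hQq
    have hcop : (Nat.card Q).Coprime p := by
      rw [hm]
      exact Nat.Coprime.pow_left _ ((Nat.coprime_primes hq (Fact.out)).mpr hqp)
    by_cases hex : ∃ N : Subgroup Q, N.Normal ∧ (∀ a : A, ∀ x ∈ N, φ a x ∈ N) ∧ N ≠ ⊥ ∧ N ≠ ⊤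
    · obtain ⟨N, hNn, hNi, hNb, hNt⟩ := hex
      haveI := hNn
      have hcardN : Nat.card N < Nat.card Q :=
        lt_of_le_of_ne (Nat.le_of_dvd Nat.card_pos (Subgroup.card_subgroup_dvd_card N))
          (fun hc => hNt (Subgroup.eq_top_of_card_eq N hc))
      have h2 : 1 < Nat.card N := N.one_lt_card_iff_ne_bot.mpr hNb
      have hcardQN : Nat.card (Q ⧸ N) < Nat.card Q := by
        calc Nat.card (Q ⧸ N) < Nat.card (Q ⧸ N) * Nat.card N :=
              (Nat.lt_mul_iff_one_lt_right Nat.card_pos).mpr h2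
        _ = Nat.card Q := (Subgroup.card_eq_card_quotient_mul_card_subgroup N).symm
      have hN_le : N ≤ Subgroup.closure (goodSet p φ) :=
        le_closure_good φ N hNi
          (ih N (by omega) (hQq.to_subgroup N) (restrictAut φ N hNi))
      have hquot := ih (Q ⧸ N) (by omega) (hQq.to_quotient N) (quotAut φ N hNi)
      set T := Subgroup.closure (goodSet p φ) with hT
      have hmap : T.map (QuotientGroup.mk' N) = ⊤ := by
        rw [eq_top_iff, ← hquot, hT, MonoidHom.map_closure]
        apply Subgroup.closure_mono
        rintro y ⟨M, hMi, hMfix⟩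
        obtain ⟨x, hx, hxfix⟩ := exists_lift_fixed hexpA hcop φ N hNi M y hMfix
        exact ⟨x, ⟨M, hMi, hxfix⟩, hx⟩
      have hcm := Subgroup.comap_map_eq (QuotientGroup.mk' N) T
      rw [hmap, Subgroup.comap_top, QuotientGroup.ker_mk'] at hcm
      have hcm' : T ⊔ N = ⊤ := hcm.symm
      rwa [sup_eq_left.mpr hN_le] at hcm'
    · push_neg at hex
      rcases subsingleton_or_nontrivial Q with hQs | hQn
      · rw [eq_top_iff]
        intro x _
        have hx1 : x = 1 := Subsingleton.elim x 1
        rw [hx1]; exact one_mem _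
      · -- center is everything
        have hcent : Subgroup.center Q = ⊤ := by
          have hinv : ∀ a : A, ∀ x ∈ Subgroup.center Q, φ a x ∈ Subgroup.center Q := by
            intro a x hx
            rw [Subgroup.mem_center_iff] at hx ⊢
            intro g
            have hg : g = φ a ((φ a).symm g) := ((φ a).apply_symm_apply g).symm
            rw [hg, ← map_mul, ← map_mul, hx]
          have hne : Subgroup.center Q ≠ ⊥ := by
            have hcnt := hQq.center_nontrivial
            intro hb
            rw [hb] at hcnt
            obtain ⟨u, v, huv⟩ := hcnt
            refine huv (Subtype.ext ?_)
            have hu := u.2; have hv := v.2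
            simp only [Subgroup.mem_bot] at hu hv
            rw [hu, hv]
          exact hex _ inferInstance hinv hne
        have comm : ∀ x y : Q, x * y = y * x := fun x y =>
          (Subgroup.mem_center_iff.mp (hcent ▸ Subgroup.mem_top y) x)
        letI : CommGroup Q := Group.commGroupOfCenterEqTop hcent
        set κ := φ.ker with hκ
        by_cases hκ1 : κ.index = 1
        · obtain ⟨M₀, hM₀⟩ := hhyp
          rw [eq_top_iff]
          intro k _
          refine Subgroup.subset_closure ⟨M₀, hM₀, fun a _ => ?_⟩
          have ha : a ∈ κ := by rw [Subgroup.index_eq_one.mp hκ1]; trivial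
          have h1 : φ a = 1 := ha
          rw [h1]; rfl
        · by_cases hκp : κ.index = p
          · rw [eq_top_iff]
            intro k _
            refine Subgroup.subset_closure ⟨κ, hκp, fun a ha => ?_⟩
            have h1 : φ a = 1 := ha
            rw [h1]; rfl
          · exfalso
            -- fixed-point-free elements
            have hfpf : ∀ g : A, g ∉ κ → ∀ x : Q, φ g x = x → x = 1 := by
              intro g hg x hx
              let C : Subgroup Q :=
                { carrier := {z | φ g z = z}
                  one_mem' := map_one (φ g)
                  mul_mem' := fun {u v} hu hv => by
                    simp only [Set.mem_setOf_eq] at hu hv ⊢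
                    rw [map_mul, hu, hv]
                  inv_mem' := fun {u} hu => by
                    simp only [Set.mem_setOf_eq] at hu ⊢
                    rw [map_inv, hu] }
              have hCinv : ∀ a : A, ∀ z ∈ C, φ a z ∈ C := by
                intro a z hz
                show φ g (φ a z) = φ a z
                have h1 : φ g (φ a z) = φ a (φ g z) := by
                  rw [← MulAut.mul_apply, ← map_mul, mul_comm, map_mul, MulAut.mul_apply]
                rw [h1]
                exact congrArg (φ a) hz
              have hCne : C ≠ ⊤ := by
                intro htop
                apply hg
                have : φ g = 1 := by
                  apply DFunLike.ext
                  intro z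
                  have hz : z ∈ C := htop ▸ Subgroup.mem_top z
                  exact hz
                exact this
              have hCbot : C = ⊥ := by
                by_contra hne
                exact hCne (hex C inferInstance hCinv hne)
              have hxC : x ∈ C := hx
              rw [hCbot] at hxC
              exact hxC
            -- norm identity
            have hnorm : ∀ g : A, g ∉ κ → ∀ y : Q,
                (∏ t : ZMod p, φ (g ^ (t.val)) y) = 1 := by
              intro g hg y
              apply hfpf g hg
              rw [map_prod]
              have hterm : ∀ t : ZMod p,
                  φ g (φ (g ^ t.val) y) = φ (g ^ ((t + 1 : ZMod p).val)) y := by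
                intro t
                rw [← MulAut.mul_apply, ← map_mul]
                congr 2
                have h1 : g * g ^ t.val = g ^ (1 + t.val) := by rw [pow_add, pow_one]
                rw [h1]
                apply pow_congr_zmod (hexpA g)
                push_cast
                simp [ZMod.natCast_val, ZMod.cast_id]
                ring
              rw [Finset.prod_congr rfl (fun t _ => hterm t)]
              exact Fintype.prod_equiv (Equiv.addRight (1 : ZMod p))
                (fun t => φ (g ^ ((t + 1 : ZMod p).val)) y) (fun t => φ (g ^ t.val) y)
                (fun t => rfl)
            -- find independent a b
            have hκtop : κ ≠ ⊤ := fun h => hκ1 (by rw [h, Subgroup.index_top])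
            obtain ⟨a, ha⟩ : ∃ a : A, a ∉ κ := by
              by_contra hc
              push_neg at hc
              exact hκtop ((Subgroup.eq_top_iff' κ).mpr hc)
            have hB : κ ⊔ Subgroup.zpowers a ≠ ⊤ := by
              intro htop
              have hgen : ∀ g : A ⧸ κ, g ∈ Subgroup.zpowers ((a : A) : A ⧸ κ) := by
                intro g
                refine QuotientGroup.induction_on g ?_
                intro x
                have hx : x ∈ κ ⊔ Subgroup.zpowers a := htop ▸ Subgroup.mem_top x
                rw [Subgroup.mem_sup] at hx
                obtain ⟨y, hy, z, hz, rfl⟩ := hx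
                obtain ⟨k, rfl⟩ := Subgroup.mem_zpowers_iff.mp hz
                refine ⟨k, ?_⟩
                have h1 : ((y * a ^ k : A) : A ⧸ κ) = ((y : A) : A ⧸ κ) * ((a ^ k : A) : A ⧸ κ) := by
                  push_cast; rfl
                rw [h1, (QuotientGroup.eq_one_iff y).mpr hy, one_mul]
                push_cast; rfl
              have h1 : κ.index = orderOf ((a : A) : A ⧸ κ) := by
                rw [orderOf_eq_card_of_forall_mem_zpowers hgen]
                rfl
              have h2 : κ.index ∣ p := by
                rw [h1]
                apply orderOf_dvd_of_pow_eq_one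
                have : (((a ^ p : A)) : A ⧸ κ) = 1 := by rw [hexpA a]; rfl
                rw [← this]; push_cast; rfl
              rcases (Nat.Prime.eq_one_or_self_of_dvd Fact.out _ h2) with h | h
              · exact hκ1 h
              · exact hκp h
            obtain ⟨b, hb⟩ : ∃ b : A, b ∉ κ ⊔ Subgroup.zpowers a := by
              by_contra hc
              push_neg at hc
              exact hB ((Subgroup.eq_top_iff' _).mpr hc)
            have hb0 : b ∉ κ := fun hbk => hb (Subgroup.mem_sup_left hbk)
            -- recovery of b from powers
            have hbrec : ∀ (B : Subgroup A) (c : ZMod p), c ≠ 0 → b ^ c.val ∈ B → b ∈ B := by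
              intro B c hc hmem
              have hcast : ((c.val * (c⁻¹ : ZMod p).val : ℕ) : ZMod p) = ((1 : ℕ) : ZMod p) := by
                push_cast
                simp only [ZMod.natCast_val, ZMod.cast_id]
                rw [mul_inv_cancel₀ hc]
              have h2 : b ^ (c.val * (c⁻¹ : ZMod p).val) = b := by
                rw [pow_congr_zmod (hexpA b) hcast, pow_one]
              have h3 : b = (b ^ c.val) ^ ((c⁻¹ : ZMod p).val) := by
                rw [← pow_mul]; exact h2.symm
              rw [h3]
              exact pow_mem hmem _
            -- the key products
            have hstar : ∀ c : ZMod p, a * b ^ c.val ∉ κ := by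
              intro c hmem
              by_cases hc : c = 0
              · subst hc
                rw [ZMod.val_zero, pow_zero, mul_one] at hmem
                exact ha hmem
              · apply hb
                have h1 : b ^ c.val = a⁻¹ * (a * b ^ c.val) := by group
                have h2 : b ^ c.val ∈ κ ⊔ Subgroup.zpowers a := by
                  rw [h1]
                  exact mul_mem (Subgroup.mem_sup_right (inv_mem (Subgroup.mem_zpowers a)))
                    (Subgroup.mem_sup_left hmem)
                exact hbrec _ c hc h2
            -- main computation : every element has p-th power one
            have hppow : ∀ x : Q, x ^ p = 1 := by
              intro x
              set f : ZMod p → ZMod p → Q := fun i j => φ (a ^ i.val * b ^ j.val) x with hf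
              have hrow : ∀ j : ZMod p, (∏ i : ZMod p, f i j) = 1 := by
                intro j
                have h1 : ∀ i : ZMod p, f i j = φ (a ^ i.val) (φ (b ^ j.val) x) := by
                  intro i
                  rw [hf]
                  simp only [map_mul, MulAut.mul_apply]
                rw [Finset.prod_congr rfl (fun i _ => h1 i)]
                exact hnorm a ha _
              have hfull : (∏ z : ZMod p × ZMod p, f z.1 z.2) = 1 := by
                rw [← Finset.univ_product_univ, Finset.prod_product']
                rw [Finset.prod_comm]
                exact Finset.prod_eq_one fun j _ => hrow j
              have hrow0 : (∏ j : ZMod p, f 0 j) = 1 := by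
                have h1 : ∀ j : ZMod p, f 0 j = φ (b ^ j.val) x := by
                  intro j
                  rw [hf]
                  simp [ZMod.val_zero]
                rw [Finset.prod_congr rfl (fun j _ => h1 j)]
                exact hnorm b hb0 _
              have h0 : (∏ z ∈ Finset.univ.filter (fun z : ZMod p × ZMod p => z.1 = 0), f z.1 z.2)
                  = ∏ j : ZMod p, f 0 j := by
                refine Finset.prod_nbij' (fun z => z.2) (fun j => ((0 : ZMod p), j)) ?_ ?_ ?_ ?_ ?_
                · intro z hz; exact Finset.mem_univ _
                · intro j hj
                  simp only [Finset.mem_filter, Finset.mem_univ, true_and]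
                · intro z hz
                  simp only [Finset.mem_filter, Finset.mem_univ, true_and] at hz
                  exact Prod.ext hz.symm rfl
                · intro j hj; rfl
                · intro z hz
                  simp only [Finset.mem_filter, Finset.mem_univ, true_and] at hz
                  rw [hz]
              have hrest : (∏ z ∈ Finset.univ.filter (fun z : ZMod p × ZMod p => ¬ z.1 = 0),
                  f z.1 z.2) = 1 := by
                have hsplit := Finset.prod_filter_mul_prod_filter_not
                  (Finset.univ : Finset (ZMod p × ZMod p)) (fun z => z.1 = 0)
                  (fun z => f z.1 z.2)
                rw [hfull, h0, hrow0, one_mul] at hsplit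
                exact hsplit
              have hD : (∏ c : ZMod p, ∏ t : ZMod p, f t (c * t)) = 1 := by
                refine Finset.prod_eq_one fun c _ => ?_
                have h1 : ∀ t : ZMod p, f t (c * t) = φ ((a * b ^ c.val) ^ t.val) x := by
                  intro t
                  have he : a ^ t.val * b ^ ((c * t : ZMod p)).val = (a * b ^ c.val) ^ t.val := by
                    rw [mul_pow, ← pow_mul]
                    congr 1
                    refine pow_congr_zmod (hexpA b) ?_
                    push_cast
                    simp [ZMod.natCast_val, ZMod.cast_id]
                  show φ (a ^ t.val * b ^ ((c * t : ZMod p)).val) x = _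
                  rw [he]
                rw [Finset.prod_congr rfl (fun t _ => h1 t)]
                exact hnorm _ (hstar c) _
              have hD2 : (∏ c : ZMod p, ∏ t : ZMod p, f t (c * t)) = x ^ p := by
                have hinner : ∀ c : ZMod p, (∏ t : ZMod p, f t (c * t))
                    = x * ∏ t ∈ Finset.univ.erase (0 : ZMod p), f t (c * t) := by
                  intro c
                  rw [← Finset.mul_prod_erase Finset.univ _ (Finset.mem_univ (0 : ZMod p))]
                  congr 1
                  rw [mul_zero, hf]
                  simp [ZMod.val_zero]
                rw [Finset.prod_congr rfl (fun c _ => hinner c), Finset.prod_mul_distrib,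
                  Finset.prod_const, Finset.card_univ, ZMod.card]
                have hbij : (∏ c : ZMod p, ∏ t ∈ Finset.univ.erase (0 : ZMod p), f t (c * t))
                    = ∏ z ∈ Finset.univ.filter (fun z : ZMod p × ZMod p => ¬ z.1 = 0),
                      f z.1 z.2 := by
                  rw [← Finset.prod_product']
                  refine Finset.prod_nbij' (fun z => (z.2, z.1 * z.2))
                    (fun w => (w.2 * w.1⁻¹, w.1)) ?_ ?_ ?_ ?_ ?_
                  · intro z hz
                    simp only [Finset.mem_product, Finset.mem_univ, Finset.mem_erase,
                      true_and] at hz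
                    simp only [Finset.mem_filter, Finset.mem_univ, true_and]
                    exact hz.1
                  · intro w hw
                    simp only [Finset.mem_filter, Finset.mem_univ, true_and] at hw
                    simp only [Finset.mem_product, Finset.mem_univ, Finset.mem_erase, true_and,
                      and_true]
                    exact hw
                  · intro z hz
                    simp only [Finset.mem_product, Finset.mem_univ, Finset.mem_erase,
                      true_and] at hz
                    exact Prod.ext (mul_inv_cancel_right₀ hz.1 z.1) rfl
                  · intro w hw
                    simp only [Finset.mem_filter, Finset.mem_univ, true_and] at hw
                    exact Prod.ext rfl (inv_mul_cancel_right₀ hw w.2)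
                  · intro z hz; rfl
                rw [hbij, hrest, mul_one]
              rw [hD2] at hD
              exact hD
            -- contradiction with nontriviality
            have htriv : ∀ x : Q, x = 1 := by
              intro x
              have h1 : orderOf x ∣ p := orderOf_dvd_of_pow_eq_one (hppow x)
              have h2 : orderOf x ∣ Nat.card Q := orderOf_dvd_natCard x
              have h3 : orderOf x ∣ 1 := hcop ▸ Nat.dvd_gcd h2 h1
              exact orderOf_eq_one_iff.mp (Nat.dvd_one.mp h3)
            obtain ⟨u, v, huv⟩ := hQn
            exact huv ((htriv u).trans (htriv v).symm)

end L1
section L0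

open scoped Pointwise

variable {p : ℕ} [Fact p.Prime]

lemma closure_goodSet_eq_top {A : Type*} [CommGroup A] [Finite A]
    (hexpA : ∀ a : A, a ^ p = 1) (hhyp : ∃ M : Subgroup A, M.index = p)
    (K : Type u) [Group K] [Finite K] (hcop : (Nat.card K).Coprime p)
    (φ : A →* MulAut K) : Subgroup.closure (goodSet p φ) = ⊤ := by
  letI : MulDistribMulAction A K := MulDistribMulAction.compHom K φ
  set T := Subgroup.closure (goodSet p φ) with hT
  by_contra hTne
  have hindex : T.index ≠ 1 := fun h => hTne (Subgroup.index_eq_one.mp h)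
  obtain ⟨q, hq, hqdvd⟩ := Nat.exists_prime_and_dvd hindex
  haveI : Fact q.Prime := ⟨hq⟩
  have hqK : q ∣ Nat.card K := hqdvd.trans (Subgroup.index_dvd_card T)
  have hqp : q ≠ p := by
    rintro rfl
    have h2 : q ∣ 1 := hcop ▸ Nat.dvd_gcd hqK dvd_rfl
    exact hq.one_lt.ne' (Nat.dvd_one.mp h2)
  have hA : IsPGroup p A := fun g => ⟨1, by rw [pow_one]; exact hexpA g⟩
  obtain ⟨P₀⟩ := (inferInstance : Nonempty (Sylow q K))
  have hnd : ¬ p ∣ Nat.card (Sylow q K) := by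
    intro hdvd
    have h1 : Nat.card (Sylow q K) ∣ Nat.card K :=
      (Sylow.card_dvd_index P₀).trans (Subgroup.index_dvd_card _)
    have h2 : p ∣ 1 := hcop ▸ Nat.dvd_gcd (hdvd.trans h1) dvd_rfl
    exact (Fact.out : p.Prime).one_lt.ne' (Nat.dvd_one.mp h2)
  obtain ⟨P, hP⟩ := hA.nonempty_fixed_point_of_prime_not_dvd_card (Sylow q K) hnd
  have hPfix : ∀ a : A, a • P = P := MulAction.mem_fixedPoints.mp hP
  have hinv : ∀ a : A, ∀ x ∈ (P : Subgroup K), φ a x ∈ (P : Subgroup K) := by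
    intro a x hx
    have h2 : a • x ∈ a • (P : Subgroup K) := Subgroup.smul_mem_pointwise_smul x a _ hx
    rw [← Sylow.pointwise_smul_def, hPfix a] at h2
    exact h2
  have hgen := closure_goodSet_eq_top_of_pgroup hexpA hhyp q hq hqp
    (Nat.card (P : Subgroup K)) (P : Subgroup K) le_rfl P.2 (restrictAut φ _ hinv)
  have hPT : (P : Subgroup K) ≤ T := le_closure_good φ _ hinv hgen
  have hcardP : q ^ (Nat.card K).factorization q ∣ Nat.card T := by
    rw [← Sylow.card_eq_multiplicity P]
    exact Subgroup.card_dvd_of_le hPT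
  have hdvd2 : q ^ ((Nat.card K).factorization q + 1) ∣ Nat.card K := by
    have h3 := mul_dvd_mul hcardP hqdvd
    rwa [← pow_succ, T.card_mul_index] at h3
  have hKpos : Nat.card K ≠ 0 := Nat.card_pos.ne'
  have := (Nat.Prime.pow_dvd_iff_le_factorization hq hKpos).mp hdvd2
  omega

end L0
section LinAlg

private lemma iInf_cons_eq {α : Type*} [CompleteLattice α] {k : ℕ} (x : α) (f : Fin k → α) :
    (⨅ i, Fin.cons (α := fun _ => α) x f i) = x ⊓ ⨅ i, f i := by
  apply le_antisymm
  · refine le_inf (iInf_le _ 0) (le_iInf fun i => ?_)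
    simpa using iInf_le (Fin.cons (α := fun _ => α) x f) i.succ
  · refine le_iInf fun i => ?_
    refine Fin.cases ?_ ?_ i
    · simpa using inf_le_left
    · intro j
      simpa using inf_le_right.trans (iInf_le f j)

private lemma exists_indep_family {F V : Type*} [Field F] [AddCommGroup V] [Module F V]
    [FiniteDimensional F V] {r : ℕ} (hr : Module.finrank F V = r)
    (𝒮 : Set (Submodule F V)) (h : sInf 𝒮 = ⊥) :
    ∃ g : Fin r → Submodule F V, (∀ i, g i ∈ 𝒮) ∧ (⨅ i, g i) = ⊥ := by
  have aux : ∀ k : ℕ, k ≤ r → ∃ g : Fin k → Submodule F V,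
      (∀ i, g i ∈ 𝒮) ∧ Module.finrank F (⨅ i, g i : Submodule F V) ≤ r - k := by
    intro k
    induction k with
    | zero =>
      intro _
      refine ⟨Fin.elim0, fun i => i.elim0, ?_⟩
      have htop : (⨅ i : Fin 0, (Fin.elim0 i : Submodule F V)) = ⊤ := by
        apply eq_top_iff.mpr
        exact le_iInf fun i => i.elim0
      rw [htop, finrank_top, hr]
      omega
    | succ k ihk =>
      intro hk1
      obtain ⟨g, hg𝒮, hgrank⟩ := ihk (by omega)
      by_cases hbot : (⨅ i, g i : Submodule F V) = ⊥
      · have hne : 𝒮.Nonempty := by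
          by_contra hemp
          rw [Set.not_nonempty_iff_eq_empty.mp hemp, sInf_empty] at h
          have h0 : Module.finrank F V = 0 := by
            rw [← finrank_top F V, h, finrank_bot]
          omega
        obtain ⟨W, hW⟩ := hne
        refine ⟨Fin.cons W g, fun i => Fin.cases hW hg𝒮 i, ?_⟩
        rw [iInf_cons_eq, hbot, inf_bot_eq, finrank_bot]
        omega
      · obtain ⟨v, hv, hv0⟩ := Submodule.ne_bot_iff _ |>.mp hbot
        have hexW : ∃ W ∈ 𝒮, v ∉ W := by
          by_contra hc
          push_neg at hc
          have hmem : v ∈ sInf 𝒮 := Submodule.mem_sInf.mpr hc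
          rw [h] at hmem
          exact hv0 hmem
        obtain ⟨W, hW𝒮, hvW⟩ := hexW
        refine ⟨Fin.cons W g, fun i => Fin.cases hW𝒮 hg𝒮 i, ?_⟩
        rw [iInf_cons_eq]
        have hlt : W ⊓ (⨅ i, g i : Submodule F V) < ⨅ i, g i := by
          refine lt_of_le_of_ne inf_le_right fun heq => hvW ?_
          have hmem : v ∈ W ⊓ ⨅ i, g i := by rw [heq]; exact hv
          exact (Submodule.mem_inf.mp hmem).1
        have := Submodule.finrank_lt_finrank_of_lt hlt
        omega
  obtain ⟨g, hg, hrank⟩ := aux r le_rfl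
  refine ⟨g, hg, ?_⟩
  have h0 : Module.finrank F (⨅ i, g i : Submodule F V) = 0 := by omega
  exact Submodule.finrank_eq_zero.mp h0

end LinAlg
/-- If the elementary abelian group `H = (ℤ/p)^r` acts faithfully on a `p'`-group `K`,
then there exist `r` linearly independent hyperplanes `H₁, …, H_r` of `H`
(index-`p` subgroups with trivial intersection) with `C_K(H) ⊊ C_K(Hᵢ)` for each `i`. -/
theorem stmt4 (p r : ℕ) [Fact p.Prime] {K : Type*} [Group K] [Finite K]
    (hcop : (Nat.card K).Coprime p)
    (φ : Multiplicative (Fin r → ZMod p) →* MulAut K)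
    (hfaithful : Function.Injective φ) :
    ∃ Hs : Fin r → Subgroup (Multiplicative (Fin r → ZMod p)),
      (∀ i, (Hs i).index = p) ∧ (⨅ i, Hs i) = ⊥ ∧
      ∀ i, {k : K | ∀ h : Multiplicative (Fin r → ZMod p), φ h k = k} ⊂
        {k : K | ∀ h ∈ Hs i, φ h k = k} := by
  haveI : NeZero p := ⟨(Fact.out : p.Prime).ne_zero⟩
  rcases Nat.eq_zero_or_pos r with hr0 | hrpos
  · subst hr0
    refine ⟨Fin.elim0, fun i => i.elim0, ?_, fun i => i.elim0⟩
    have h1 : (⨅ i : Fin 0, (Fin.elim0 i : Subgroup (Multiplicative (Fin 0 → ZMod p)))) = ⊤ := by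
      apply eq_top_iff.mpr
      exact le_iInf fun i => i.elim0
    rw [h1]
    ext x
    simp only [Subgroup.mem_top, Subgroup.mem_bot, true_iff]
    exact Subsingleton.elim x 1
  · set A := Multiplicative (Fin r → ZMod p) with hA
    have hexpA : ∀ a : A, a ^ p = 1 := by
      intro a
      have h1 : (Multiplicative.toAdd (a ^ p)) = p • Multiplicative.toAdd a := rfl
      apply Multiplicative.toAdd.injective
      rw [h1]
      funext i
      show p • (Multiplicative.toAdd a i) = 0
      rw [nsmul_eq_mul, ZMod.natCast_self, zero_mul]
    have hhyp : ∃ M : Subgroup A, M.index = p := by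
      let i0 : Fin r := ⟨0, hrpos⟩
      let ε : A →* Multiplicative (ZMod p) :=
        AddMonoidHom.toMultiplicative (Pi.evalAddMonoidHom (fun _ : Fin r => ZMod p) i0)
      refine ⟨ε.ker, ?_⟩
      have hsurj : Function.Surjective ε := fun y => ⟨Multiplicative.ofAdd (fun _ => y.toAdd), rfl⟩
      rw [Subgroup.index_ker, MonoidHom.range_eq_top_of_surjective ε hsurj]
      rw [Nat.card_congr Subgroup.topEquiv.toEquiv]
      simp only [Nat.card_eq_fintype_card, Fintype.card_multiplicative, ZMod.card]
    have hclosure := closure_goodSet_eq_top hexpA hhyp K hcop φ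
    set 𝒮 : Set (Subgroup A) :=
      {M | M.index = p ∧ ∃ k : K, (¬ ∀ h : A, φ h k = k) ∧ ∀ h ∈ M, φ h k = k} with h𝒮
    have hinf : sInf 𝒮 = ⊥ := by
      rw [eq_bot_iff]
      intro h hh
      simp only [Subgroup.mem_sInf] at hh
      have hfixall : ∀ k : K, φ h k = k := by
        intro k
        have hk : k ∈ Subgroup.closure (goodSet p φ) := by rw [hclosure]; trivial
        induction hk using Subgroup.closure_induction with
        | mem k hkmem =>
          obtain ⟨M, hMi, hMfix⟩ := hkmem
          by_cases hkH : ∀ h' : A, φ h' k = k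
          · exact hkH h
          · exact hMfix h (hh M ⟨hMi, k, hkH, hMfix⟩)
        | one => exact map_one (φ h)
        | mul a b _ _ ha hb => rw [map_mul, ha, hb]
        | inv a _ ha => rw [map_inv, ha]
      have hone : φ h = 1 := DFunLike.ext _ _ fun k => hfixall k
      have hh1 : h = 1 := hfaithful (hone.trans (map_one φ).symm)
      simp [hh1]
    let e : Subgroup A ≃o Submodule (ZMod p) (Fin r → ZMod p) :=
      (AddSubgroup.toSubgroup (A := Fin r → ZMod p)).symm.trans (AddSubgroup.toZModSubmodule p)
    have hrk : Module.finrank (ZMod p) (Fin r → ZMod p) = r := by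
      simp [Module.finrank_pi]
    have hsinf : sInf (e '' 𝒮) = ⊥ := by
      rw [sInf_image, ← OrderIso.map_sInf, hinf, e.map_bot]
    obtain ⟨g, hg𝒮, hginf⟩ := exists_indep_family hrk (e '' 𝒮) hsinf
    have hMs : ∀ i, ∃ M ∈ 𝒮, e M = g i := fun i => hg𝒮 i
    choose Ms hMsmem hMse using hMs
    refine ⟨Ms, fun i => (hMsmem i).1, ?_, fun i => ?_⟩
    · have h1 : e (⨅ i, Ms i) = ⊥ := by
        rw [OrderIso.map_iInf]
        rw [← hginf]
        exact iInf_congr hMse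
      have h2 : e (⨅ i, Ms i) = e ⊥ := by rw [h1, e.map_bot]
      exact e.injective h2
    · obtain ⟨hMp, k, hknot, hkfix⟩ := hMsmem i
      have hsub : {k : K | ∀ h : A, φ h k = k} ⊆ {k : K | ∀ h ∈ Ms i, φ h k = k} :=
        fun x hx a _ => hx a
      rw [Set.ssubset_iff_of_subset hsub]
      exact ⟨k, hkfix, hknot⟩
end

section
/- For sequences [i₁,…,i_{r−1}] and [j₁,…,j_{r−1}] of distinct elements of {1,…,r} such that i_s = j_s for all s ≤ r−2 but i_{r−1} ≠ j_{r−1}, the signatures satisfy ε_{[i₁,…,i_{r−1}]} + ε_{[j₁,…,j_{r−1}]} = 0. -/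
/-- Number of inversions of a list of naturals: pairs of positions out of order. -/
def inversionCount (l : List ℕ) : ℕ :=
  (Finset.univ.filter
    (fun q : Fin l.length × Fin l.length => q.1.1 < q.2.1 ∧ l.get q.2 < l.get q.1)).card

/-- Number of positions at which the increasing rearrangement of `l` differs from
`[1, 2, …, l.length]`. -/
def mismatchCount (l : List ℕ) : ℕ :=
  ((List.range l.length).filter (fun i => (l.mergeSort (· ≤ ·)).getD i 0 ≠ i + 1)).length

/-- The signature `ε_{[i₁,…,i_l]} = (−1)^{n+m}` of a sequence, where `n` is the number of
transpositions needed to sort it (parity given by the inversion count) and `m` the number of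
entries where the sorted sequence differs from `[1,…,l]`. -/
def signatureOf (l : List ℕ) : ℤ := (-1) ^ (inversionCount l + mismatchCount l)

section helpers

lemma mergeSort_eq (r c : ℕ) (l : List ℕ) (hlen : l.length = r - 1)
    (hnd : l.Nodup) (hmem : ∀ x ∈ l, x ∈ Finset.Icc 1 r)
    (hc : c ∈ Finset.Icc 1 r) (hcl : c ∉ l) :
    l.mergeSort (· ≤ ·) = List.range' 1 (c-1) ++ List.range' (c+1) (r-c) := by
  set L := List.range' 1 (c-1) ++ List.range' (c+1) (r-c) with hL
  simp only [Finset.mem_Icc] at hc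
  have hLnd : L.Nodup := by
    rw [hL, List.nodup_append]
    refine ⟨List.nodup_range', List.nodup_range', ?_⟩
    intro x hx y hy
    rw [List.mem_range'_1] at hx hy
    omega
  have hTF : l.toFinset = Finset.Icc 1 r \ {c} := by
    apply Finset.eq_of_subset_of_card_le
    · intro x hx
      rw [List.mem_toFinset] at hx
      simp only [Finset.mem_sdiff, Finset.mem_singleton]
      exact ⟨hmem x hx, fun h => hcl (h ▸ hx)⟩
    · rw [Finset.card_sdiff_of_subset (by simpa using hc), List.card_toFinset, hnd.dedup, hlen]
      simp
  have hLTF : L.toFinset = Finset.Icc 1 r \ {c} := by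
    ext x
    simp only [hL, List.toFinset_append, Finset.mem_union, List.mem_toFinset,
      List.mem_range'_1, Finset.mem_sdiff, Finset.mem_Icc, Finset.mem_singleton]
    omega
  have hperm : l.Perm L := List.perm_of_nodup_nodup_toFinset_eq hnd hLnd (hTF.trans hLTF.symm)
  have hp := List.mergeSort_perm l (fun a b : ℕ => a ≤ b)
  refine List.Perm.eq_of_pairwise' (r := (· ≤ · : ℕ → ℕ → Prop)) ?_ ?_ (hp.trans hperm)
  · have := List.pairwise_mergeSort (le := fun a b : ℕ => a ≤ b)
      (by intro a b c; simp; omega) (by intro a b; simp; omega) l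
    simpa using this
  · rw [hL, List.pairwise_append]
    refine ⟨List.pairwise_le_range' _, List.pairwise_le_range' _, ?_⟩
    intro x hx y hy
    rw [List.mem_range'_1] at hx
    rw [List.mem_range'_1] at hy
    omega

lemma filter_ge_range (n m : ℕ) (h : m ≤ n) :
    (List.range n).filter (fun i => decide (m ≤ i)) = List.range' m (n - m) := by
  have hsplit : List.range n = List.range' 0 m ++ List.range' m (n - m) := by
    have := List.range'_append_1 (s := 0) (m := m) (n := n - m)
    simp only [Nat.zero_add] at this
    rw [List.range_eq_range', this]
    congr 1
    omega
  rw [hsplit, List.filter_append]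
  have h1 : (List.range' 0 m).filter (fun i => decide (m ≤ i)) = [] := by
    apply List.filter_eq_nil_iff.mpr
    intro a ha
    rw [List.mem_range'_1] at ha
    simp
    omega
  have h2 : (List.range' m (n - m)).filter (fun i => decide (m ≤ i)) = List.range' m (n-m) := by
    apply List.filter_eq_self.mpr
    intro a ha
    rw [List.mem_range'_1] at ha
    simp
    omega
  rw [h1, h2, List.nil_append]

lemma mismatch_eq (r c : ℕ) (l : List ℕ) (hlen : l.length = r - 1)
    (hnd : l.Nodup) (hmem : ∀ x ∈ l, x ∈ Finset.Icc 1 r)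
    (hc : c ∈ Finset.Icc 1 r) (hcl : c ∉ l) :
    mismatchCount l = r - c := by
  have hM := mergeSort_eq r c l hlen hnd hmem hc hcl
  simp only [Finset.mem_Icc] at hc
  rw [mismatchCount, hM, hlen]
  have key : ∀ i ∈ List.range (r-1),
      (decide ((List.range' 1 (c-1) ++ List.range' (c+1) (r-c)).getD i 0 ≠ i + 1))
        = decide (c - 1 ≤ i) := by
    intro i hi
    rw [List.mem_range] at hi
    rw [List.getD_eq_getElem _ _ (by simp [List.length_range']; omega)]
    by_cases hic : i < c - 1
    · rw [List.getElem_append_left (by rw [List.length_range']; omega)]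
      rw [List.getElem_range']
      simp only [ne_eq, decide_eq_decide]
      omega
    · rw [List.getElem_append_right (by rw [List.length_range']; omega)]
      rw [List.getElem_range', List.length_range']
      simp only [ne_eq, decide_eq_decide]
      omega
  rw [List.filter_congr key, filter_ge_range _ _ (by omega), List.length_range']
  omega

lemma card_eq_sum (l : List ℕ) : inversionCount l
    = ∑ i : Fin l.length, ∑ j : Fin l.length,
        (if i.1 < j.1 ∧ l.get j < l.get i then 1 else 0) := by
  rw [inversionCount, Finset.card_filter, Fintype.sum_prod_type]

lemma inv_append (P : List ℕ) (x : ℕ) :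
    inversionCount (P ++ [x]) = inversionCount P
      + (Finset.univ.filter (fun i : Fin P.length => x < P.get i)).card := by
  classical
  set n := P.length with hn
  have hl : (P ++ [x]).length = n + 1 := by simp [hn]
  set g : Fin (n+1) → ℕ := fun i => (P ++ [x]).get (Fin.cast hl.symm i) with hg
  have hgP : ∀ i : Fin n, g i.castSucc = P.get i := by
    intro i
    simp only [hg, List.get_eq_getElem, Fin.coe_cast, Fin.coe_castSucc]
    exact List.getElem_append_left i.2
  have hgx : g (Fin.last n) = x := by
    simp only [hg, List.get_eq_getElem, Fin.coe_cast, Fin.val_last]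
    rw [List.getElem_append_right (le_refl _)]
    simp
  have step1 : inversionCount (P ++ [x])
      = ∑ i : Fin (n+1), ∑ j : Fin (n+1), (if i.1 < j.1 ∧ g j < g i then 1 else 0) := by
    rw [card_eq_sum]
    apply Fintype.sum_equiv (finCongr hl)
    intro i
    apply Fintype.sum_equiv (finCongr hl)
    intro j
    congr 1
  rw [step1, Fin.sum_univ_castSucc]
  have hlast0 : ∑ j : Fin (n+1), (if (Fin.last n).1 < j.1 ∧ g j < g (Fin.last n) then 1 else 0) = 0 := by
    apply Finset.sum_eq_zero
    intro j _
    rw [if_neg]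
    rintro ⟨h1, -⟩
    have := j.2
    simp only [Fin.val_last] at h1
    omega
  rw [hlast0, add_zero]
  have step2 : ∀ i : Fin n,
      ∑ j : Fin (n+1), (if (i.castSucc).1 < j.1 ∧ g j < g i.castSucc then 1 else 0)
      = (∑ j : Fin n, (if i.1 < j.1 ∧ P.get j < P.get i then 1 else 0))
        + (if x < P.get i then 1 else 0) := by
    intro i
    rw [Fin.sum_univ_castSucc]
    congr 1
    · apply Finset.sum_congr rfl
      intro j _
      rw [hgP, hgP]
      simp
    · rw [hgx, hgP]
      simp only [Fin.coe_castSucc, Fin.val_last]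
      congr 1
      simp only [eq_iff_iff, and_iff_right_iff_imp]
      intro _
      exact i.2
  rw [Finset.sum_congr rfl (fun i _ => step2 i), Finset.sum_add_distrib]
  congr 1
  · rw [card_eq_sum]
  · rw [Finset.card_filter]

lemma fin_filter_card {P : List ℕ} (hnd : P.Nodup) (p : ℕ → Prop) [DecidablePred p] :
    (Finset.univ.filter (fun i : Fin P.length => p (P.get i))).card
      = (P.toFinset.filter p).card := by
  apply Finset.card_bij (fun i _ => P.get i)
  · intro i hi
    simp only [Finset.mem_filter, Finset.mem_univ, true_and] at hi
    simp only [Finset.mem_filter, List.mem_toFinset]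
    exact ⟨List.get_mem _ _, hi⟩
  · intro i _ j _ hij
    exact (List.nodup_iff_injective_get.mp hnd) hij
  · intro x hx
    simp only [Finset.mem_filter, List.mem_toFinset] at hx
    obtain ⟨i, hi⟩ := List.mem_iff_get.mp hx.1
    exact ⟨i, by simpa only [Finset.mem_filter, Finset.mem_univ, true_and, hi] using hx.2, hi⟩

lemma key_lemma (r : ℕ) (P : List ℕ) (a b : ℕ) (hab : a < b)
    (hPnd : P.Nodup) (haP : a ∉ P) (hbP : b ∉ P)
    (hPlen : P.length = r - 2) (hr : 2 ≤ r)
    (hmem : ∀ x ∈ P, x ∈ Finset.Icc 1 r)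
    (ha : a ∈ Finset.Icc 1 r) (hb : b ∈ Finset.Icc 1 r) :
    signatureOf (P ++ [a]) + signatureOf (P ++ [b]) = 0 := by
  classical
  simp only [Finset.mem_Icc] at ha hb
  have hPTF : P.toFinset = (Finset.Icc 1 r) \ {a, b} := by
    apply Finset.eq_of_subset_of_card_le
    · intro x hx
      rw [List.mem_toFinset] at hx
      simp only [Finset.mem_sdiff, Finset.mem_insert, Finset.mem_singleton]
      refine ⟨by simpa [Finset.mem_Icc] using hmem x hx, ?_⟩
      rintro (rfl | rfl)
      · exact haP hx
      · exact hbP hx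
    · rw [Finset.card_sdiff_of_subset]
      · rw [List.card_toFinset, hPnd.dedup, hPlen, Nat.card_Icc,
          Finset.card_insert_of_notMem (by simp; omega), Finset.card_singleton]
        omega
      · intro x hx
        simp only [Finset.mem_insert, Finset.mem_singleton] at hx
        simp only [Finset.mem_Icc]
        rcases hx with rfl | rfl <;> omega
  -- lengths and membership for appended lists
  have hlen₁ : (P ++ [a]).length = r - 1 := by simp [hPlen]; omega
  have hlen₂ : (P ++ [b]).length = r - 1 := by simp [hPlen]; omega
  have hnd₁ : (P ++ [a]).Nodup := by
    rw [List.nodup_append]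
    exact ⟨hPnd, List.nodup_singleton a, by intro x hx y hy hxy; simp at hy; subst hy; subst hxy; exact haP hx⟩
  have hnd₂ : (P ++ [b]).Nodup := by
    rw [List.nodup_append]
    exact ⟨hPnd, List.nodup_singleton b, by intro x hx y hy hxy; simp at hy; subst hy; subst hxy; exact hbP hx⟩
  have hmem₁ : ∀ x ∈ P ++ [a], x ∈ Finset.Icc 1 r := by
    intro x hx
    rcases List.mem_append.mp hx with h | h
    · exact hmem x h
    · simp at h; subst h; simp [Finset.mem_Icc]; omega
  have hmem₂ : ∀ x ∈ P ++ [b], x ∈ Finset.Icc 1 r := by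
    intro x hx
    rcases List.mem_append.mp hx with h | h
    · exact hmem x h
    · simp at h; subst h; simp [Finset.mem_Icc]; omega
  have hbin : b ∉ P ++ [a] := by
    intro h
    rcases List.mem_append.mp h with h | h
    · exact hbP h
    · simp at h; omega
  have hain : a ∉ P ++ [b] := by
    intro h
    rcases List.mem_append.mp h with h | h
    · exact haP h
    · simp at h; omega
  -- mismatch counts
  have hm₁ : mismatchCount (P ++ [a]) = r - b :=
    mismatch_eq r b _ hlen₁ hnd₁ hmem₁ (by simp [Finset.mem_Icc]; omega) hbin
  have hm₂ : mismatchCount (P ++ [b]) = r - a :=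
    mismatch_eq r a _ hlen₂ hnd₂ hmem₂ (by simp [Finset.mem_Icc]; omega) hain
  -- inversion counts
  have hfa : (P.toFinset.filter (fun p => a < p)).card = r - a - 1 := by
    have : P.toFinset.filter (fun p => a < p) = (Finset.Icc (a+1) r).erase b := by
      ext x
      simp only [hPTF, Finset.mem_filter, Finset.mem_sdiff, Finset.mem_insert,
        Finset.mem_singleton, Finset.mem_erase, Finset.mem_Icc]
      omega
    rw [this, Finset.card_erase_of_mem (by simp [Finset.mem_Icc]; omega), Nat.card_Icc]
    omega
  have hfb : (P.toFinset.filter (fun p => b < p)).card = r - b := by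
    have : P.toFinset.filter (fun p => b < p) = Finset.Icc (b+1) r := by
      ext x
      simp only [hPTF, Finset.mem_filter, Finset.mem_sdiff, Finset.mem_insert,
        Finset.mem_singleton, Finset.mem_Icc]
      omega
    rw [this, Nat.card_Icc]
    omega
  have hi₁ : inversionCount (P ++ [a]) = inversionCount P + (r - a - 1) := by
    rw [inv_append, fin_filter_card hPnd, hfa]
  have hi₂ : inversionCount (P ++ [b]) = inversionCount P + (r - b) := by
    rw [inv_append, fin_filter_card hPnd, hfb]
  -- conclude
  rw [signatureOf, signatureOf, hi₁, hi₂, hm₁, hm₂]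
  have hexp : inversionCount P + (r - b) + (r - a)
      = (inversionCount P + (r - a - 1) + (r - b)) + 1 := by omega
  rw [hexp, pow_succ]
  ring

end helpers

/-- Two sequences in `S^r_{r-1}` agreeing except in the last entry have opposite signatures. -/
theorem stmt6 (r : ℕ) (l₁ l₂ : List ℕ)
    (hlen₁ : l₁.length = r - 1) (hlen₂ : l₂.length = r - 1)
    (hnd₁ : l₁.Nodup) (hnd₂ : l₂.Nodup)
    (hmem₁ : ∀ x ∈ l₁, x ∈ Finset.Icc 1 r) (hmem₂ : ∀ x ∈ l₂, x ∈ Finset.Icc 1 r)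
    (hagree : l₁.take (r - 2) = l₂.take (r - 2))
    (hlast : l₁.getLast? ≠ l₂.getLast?) :
    signatureOf l₁ + signatureOf l₂ = 0 := by
  classical
  by_cases hr : r ≤ 1
  · exfalso
    have h1 : l₁ = [] := List.length_eq_zero_iff.mp (by omega)
    have h2 : l₂ = [] := List.length_eq_zero_iff.mp (by omega)
    exact hlast (by rw [h1, h2])
  push_neg at hr
  have hr2 : 2 ≤ r := hr
  have h₁ne : l₁ ≠ [] := List.ne_nil_of_length_pos (by rw [hlen₁]; omega)
  have h₂ne : l₂ ≠ [] := List.ne_nil_of_length_pos (by rw [hlen₂]; omega)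
  set a := l₁.getLast h₁ne with hadef
  set b := l₂.getLast h₂ne with hbdef
  have hsplit₁ : l₁ = l₁.take (r - 2) ++ [a] := by
    conv_lhs => rw [← List.dropLast_append_getLast h₁ne]
    rw [List.dropLast_eq_take, hlen₁]
    rfl
  have hsplit₂ : l₂ = l₂.take (r - 2) ++ [b] := by
    conv_lhs => rw [← List.dropLast_append_getLast h₂ne]
    rw [List.dropLast_eq_take, hlen₂]
    rfl
  set P := l₁.take (r - 2) with hPdef
  have hsplit₂' : l₂ = P ++ [b] := by rw [hagree]; exact hsplit₂
  have hab : a ≠ b := by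
    intro h
    apply hlast
    rw [List.getLast?_eq_getLast h₁ne, List.getLast?_eq_getLast h₂ne, ← hadef, ← hbdef, h]
  have hPnd : P.Nodup ∧ a ∉ P := by
    have := hsplit₁ ▸ hnd₁
    rw [List.nodup_append] at this
    exact ⟨this.1, fun h => this.2.2 a h a (by simp) rfl⟩
  have hbP : b ∉ P := by
    have := hsplit₂' ▸ hnd₂
    rw [List.nodup_append] at this
    exact fun h => this.2.2 b h b (by simp) rfl
  have hPlen : P.length = r - 2 := by
    rw [hPdef, List.length_take, hlen₁]
    omega
  have hmemP : ∀ x ∈ P, x ∈ Finset.Icc 1 r := fun x hx =>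
    hmem₁ x (by rw [hsplit₁]; exact List.mem_append.mpr (Or.inl hx))
  have haI : a ∈ Finset.Icc 1 r := hmem₁ a (by rw [hsplit₁]; simp)
  have hbI : b ∈ Finset.Icc 1 r := hmem₂ b (by rw [hsplit₂']; simp)
  rw [hsplit₁, hsplit₂']
  rcases lt_or_gt_of_ne hab with h | h
  · exact key_lemma r P a b h hPnd.1 hPnd.2 hbP hPlen hr2 hmemP haI hbI
  · rw [add_comm]
    exact key_lemma r P b a h hPnd.1 hbP hPnd.2 hPlen hr2 hmemP hbI haI
end

section
/- Let H = (ℤ/p)^r act on a p'-group K, let G = K ⋊ H, and let k₁, k₂ ∈ K satisfy k₁Hk₁⁻¹ = k₂Hk₂⁻¹. Then for every subgroup I ≤ H, we have k₁Ik₁⁻¹ = k₂Ik₂⁻¹. -/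
/-- In a semidirect product `G = K ⋊ H` with `H` elementary abelian of order `p^r` and `K` a
`p'`-group, if `k₁, k₂ ∈ K` give the same conjugate of `H`, then they give the same conjugate
of every subgroup `I ≤ H`. -/
theorem stmt8 {G : Type*} [Group G] [Finite G] (p r : ℕ) [Fact p.Prime]
    (K H : Subgroup G) (hKn : K.Normal) (hdisj : K ⊓ H = ⊥) (hsup : K ⊔ H = ⊤)
    (hHcard : Nat.card H = p ^ r) (helem : ∀ x ∈ H, x ^ p = 1)
    (hHab : ∀ a ∈ H, ∀ b ∈ H, a * b = b * a)
    (hK' : ¬ p ∣ Nat.card K)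
    (k₁ k₂ : G) (hk₁ : k₁ ∈ K) (hk₂ : k₂ ∈ K)
    (hconj : H.map (MulAut.conj k₁).toMonoidHom = H.map (MulAut.conj k₂).toMonoidHom) :
    ∀ I : Subgroup G, I ≤ H →
      I.map (MulAut.conj k₁).toMonoidHom = I.map (MulAut.conj k₂).toMonoidHom := by
  intro I hI
  set k : G := k₂⁻¹ * k₁ with hk
  have hkK : k ∈ K := K.mul_mem (K.inv_mem hk₂) hk₁
  -- k centralizes H
  have hcent : ∀ h ∈ H, k * h * k⁻¹ = h := by
    intro h hh
    have h1 : k₁ * h * k₁⁻¹ ∈ H.map (MulAut.conj k₂).toMonoidHom := by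
      rw [← hconj]
      exact ⟨h, hh, rfl⟩
    obtain ⟨h', hh', heq⟩ := h1
    have heq' : k₂ * h' * k₂⁻¹ = k₁ * h * k₁⁻¹ := by
      simpa [MulAut.conj_apply, mul_assoc] using heq
    have hkh : k * h * k⁻¹ = h' := by
      rw [hk]
      have := congrArg (fun x => k₂⁻¹ * x * k₂) heq'
      simp only [mul_assoc, mul_inv_cancel, inv_mul_cancel, mul_one, one_mul,
        inv_mul_cancel_left] at this
      rw [this]
      group
    -- commutator in K ⊓ H
    have hcK : k * h * k⁻¹ * h⁻¹ ∈ K := by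
      have : h * k⁻¹ * h⁻¹ ∈ K := by
        simpa [mul_assoc] using hKn.conj_mem _ (K.inv_mem hkK) h
      simpa [mul_assoc] using K.mul_mem hkK this
    have hcH : k * h * k⁻¹ * h⁻¹ ∈ H := H.mul_mem (hkh ▸ hh') (H.inv_mem hh)
    have hc1 : k * h * k⁻¹ * h⁻¹ = 1 := by
      have : k * h * k⁻¹ * h⁻¹ ∈ K ⊓ H := ⟨hcK, hcH⟩
      rw [hdisj] at this
      simpa using this
    calc k * h * k⁻¹ = (k * h * k⁻¹ * h⁻¹) * h := by group
      _ = h := by rw [hc1, one_mul]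
  -- hence k₁ x k₁⁻¹ = k₂ x k₂⁻¹ for x ∈ H
  have key : ∀ x ∈ H, k₁ * x * k₁⁻¹ = k₂ * x * k₂⁻¹ := by
    intro x hx
    have := hcent x hx
    rw [hk] at this
    have := congrArg (fun y => k₂ * y * k₂⁻¹) this
    rw [← this]
    group
  ext y
  simp only [Subgroup.mem_map, MulEquiv.coe_toMonoidHom, MulAut.conj_apply]
  constructor
  · rintro ⟨x, hx, rfl⟩
    exact ⟨x, hx, (key x (hI hx)).symm⟩
  · rintro ⟨x, hx, rfl⟩
    exact ⟨x, hx, key x (hI hx)⟩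
end

section
/- Let G = K ⋊ H with H = (ℤ/p)^r acting faithfully on a p'-group K with |K| = q₁^{e₁}⋯q_l^{e_l} (distinct primes q_i ≠ p). If r < q_i for all i, then for any r linearly independent hyperplanes H₁,…,H_r of H with N(H_i) > 1, one has Σ_{i=1}^r 1/N(H_i) < 1, i.e., Σ_{i=1}^r |K|/|C_K(H_i)| < |K|/|C_K(H)|. -/
/-- Let `G = K ⋊ H` with `H` elementary abelian of order `p^r` acting faithfully on the
`p'`-group `K`, and suppose every prime `q` dividing `|K|` satisfies `r < q`. Then for any `r`
linearly independent hyperplanes `H₁,…,H_r` of `H` with `N(Hᵢ) > 1` (i.e.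
`C_K(H) ⊊ C_K(Hᵢ)`), one has `Σᵢ |K|/|C_K(Hᵢ)| < |K|/|C_K(H)|`. -/
theorem stmt10 {G : Type*} [Group G] [Finite G] (p r : ℕ) [Fact p.Prime]
    (K H : Subgroup G) (hKn : K.Normal) (hdisj : K ⊓ H = ⊥) (hsup : K ⊔ H = ⊤)
    (hHcard : Nat.card H = p ^ r) (helem : ∀ x ∈ H, x ^ p = 1)
    (hHab : ∀ a ∈ H, ∀ b ∈ H, a * b = b * a)
    (hK' : ¬ p ∣ Nat.card K)
    (hfaithful : ∀ h ∈ H, (∀ k ∈ K, h * k * h⁻¹ = k) → h = 1)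
    (hprimes : ∀ q : ℕ, q.Prime → q ∣ Nat.card K → r < q)
    (Hs : Fin r → Subgroup G) (hHsH : ∀ i, Hs i ≤ H)
    (hHsidx : ∀ i, (Hs i).relIndex H = p) (hindep : (⨅ i, Hs i) ⊓ H = ⊥)
    (hbig : ∀ i, Subgroup.centralizer (H : Set G) ⊓ K <
      Subgroup.centralizer ((Hs i : Subgroup G) : Set G) ⊓ K) :
    ∑ i : Fin r,
        Nat.card K / Nat.card ↥(Subgroup.centralizer ((Hs i : Subgroup G) : Set G) ⊓ K) <
      Nat.card K / Nat.card ↥(Subgroup.centralizer (H : Set G) ⊓ K) := by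
  classical
  have hKpos : 0 < Nat.card K := Nat.card_pos
  set a := Nat.card ↥(Subgroup.centralizer (H : Set G) ⊓ K) with ha
  have haK : a ∣ Nat.card K := Subgroup.card_dvd_of_le inf_le_right
  have hapos : 0 < a := Nat.card_pos
  have hKa1 : 1 ≤ Nat.card K / a := (Nat.one_le_div_iff hapos).mpr (Nat.le_of_dvd hKpos haK)
  have key : ∀ i, (r + 1) *
      (Nat.card K / Nat.card ↥(Subgroup.centralizer ((Hs i : Subgroup G) : Set G) ⊓ K))
        ≤ Nat.card K / a := by
    intro i
    set b := Nat.card ↥(Subgroup.centralizer ((Hs i : Subgroup G) : Set G) ⊓ K) with hb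
    have hab : a ∣ b := Subgroup.card_dvd_of_le (hbig i).le
    have hbK : b ∣ Nat.card K := Subgroup.card_dvd_of_le inf_le_right
    have haleb : a ≤ b := Subgroup.card_le_of_le (hbig i).le
    have haltb : a < b := by
      rcases lt_or_eq_of_le haleb with h | h
      · exact h
      · exact absurd (Subgroup.eq_of_le_of_card_ge (hbig i).le h.ge) (hbig i).ne
    set N := b / a with hN
    have hbN : b = a * N := (Nat.mul_div_cancel' hab).symm
    have hN1 : 1 < N := by
      rcases Nat.lt_or_ge N 2 with h | h
      · interval_cases N <;> omega
      · omega
    have hNK : N ∣ Nat.card K := (Dvd.intro_left a hbN.symm).trans hbK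
    have hq := hprimes N.minFac (Nat.minFac_prime (by omega)) (N.minFac_dvd.trans hNK)
    have hNr : r + 1 ≤ N := le_trans (by omega) (Nat.minFac_le (by omega))
    have hKa : Nat.card K / a = N * (Nat.card K / b) := by
      have h1 : Nat.card K = b * (Nat.card K / b) := (Nat.mul_div_cancel' hbK).symm
      calc Nat.card K / a = a * N * (Nat.card K / b) / a := by rw [← hbN, ← h1]
        _ = N * (Nat.card K / b) := by
            rw [mul_assoc, Nat.mul_div_cancel_left _ hapos]
    rw [hKa]
    exact Nat.mul_le_mul_right _ hNr
  by_contra hcon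
  push_neg at hcon
  have hsum : (r + 1) * (∑ i : Fin r,
      Nat.card K / Nat.card ↥(Subgroup.centralizer ((Hs i : Subgroup G) : Set G) ⊓ K))
        ≤ r * (Nat.card K / a) := by
    rw [Finset.mul_sum]
    calc _ ≤ ∑ _i : Fin r, Nat.card K / a := Finset.sum_le_sum fun i _ => key i
      _ = r * (Nat.card K / a) := by simp [Finset.sum_const, mul_comm]
  have h2 := le_trans (Nat.mul_le_mul_left (r + 1) hcon) hsum
  rw [add_mul, one_mul] at h2
  omega
end

section
/- Let H be an elementary abelian p-group acting on Y = X^m permuting the factors transitively, I ≤ H, H' = N_H(X), I' = N_I(X), and let k = |H:H'| / |I:I'| be the number of orbits of I on the set of factors. Then C_Y(I) properly contains C_Y(H) if and only if either (k = 1 and C_X(I') > C_X(H')) or (k > 1 and C_X(I') ≠ 1). -/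
namespace Stmt13Aux

variable {m : ℕ} {X : Type*} [Group X] {H : Type*} [CommGroup H]
variable (φ : H →* MulAut (Fin m → X)) (ρ : H →* Equiv.Perm (Fin m))

/-- The map induced on factor `j` by `h`, landing in factor `ρ h j`. -/
def F (h : H) (j : Fin m) (x : X) : X := φ h (Pi.mulSingle j x) (ρ h j)

variable (hfactor : ∀ (h : H) (y y' : Fin m → X) (i : Fin m),
      y i = y' i → φ h y (ρ h i) = φ h y' (ρ h i))

include hfactor in
theorem F_apply (h : H) (y : Fin m → X) (j : Fin m) :
    φ h y (ρ h j) = F φ ρ h j (y j) :=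
  hfactor h y (Pi.mulSingle j (y j)) j (by simp)

theorem F_id (j : Fin m) (x : X) : F φ ρ 1 j x = x := by
  simp [F]

theorem F_one (h : H) (j : Fin m) : F φ ρ h j 1 = 1 := by
  simp only [F, Pi.mulSingle_one, map_one]
  rfl

include hfactor in
theorem F_mul (g h : H) (j : Fin m) (x : X) :
    F φ ρ (g * h) j x = F φ ρ g (ρ h j) (F φ ρ h j x) := by
  have h1 := F_apply φ ρ hfactor g (φ h (Pi.mulSingle j x)) (ρ h j)
  simp only [F, map_mul] at h1 ⊢
  exact h1

include hfactor in
theorem F_injective (h : H) (j : Fin m) : Function.Injective (F φ ρ h j) := by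
  intro x x' hx
  have k1 := F_mul φ ρ hfactor h⁻¹ h j x
  have k2 := F_mul φ ρ hfactor h⁻¹ h j x'
  rw [inv_mul_cancel, F_id, hx, ← k2, inv_mul_cancel, F_id] at k1
  exact k1

include hfactor in
theorem F_ne_one (h : H) (j : Fin m) {x : X} (hx : x ≠ 1) : F φ ρ h j x ≠ 1 := by
  intro hc
  exact hx (F_injective φ ρ hfactor h j (hc.trans (F_one φ ρ h j).symm))

include hfactor in
theorem fix_iff (h : H) (y : Fin m → X) :
    φ h y = y ↔ ∀ j, F φ ρ h j (y j) = y (ρ h j) := by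
  constructor
  · intro hy j
    rw [← F_apply φ ρ hfactor, hy]
  · intro hy
    funext i
    have := hy ((ρ h).symm i)
    rwa [← F_apply φ ρ hfactor, Equiv.apply_symm_apply] at this

variable [NeZero m]

include hfactor in
theorem single_fix_iff (h : H) (hh : ρ h 0 = 0) (x : X) :
    φ h (Pi.mulSingle 0 x) = Pi.mulSingle 0 x ↔ F φ ρ h 0 x = x := by
  constructor
  · intro he
    have h0 := F_apply φ ρ hfactor h (Pi.mulSingle 0 x) 0
    rw [hh, Pi.mulSingle_eq_same] at h0
    rw [he, Pi.mulSingle_eq_same] at h0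
    exact h0.symm
  · intro he
    funext i
    rcases eq_or_ne i 0 with rfl | hi
    · have h0 := F_apply φ ρ hfactor h (Pi.mulSingle 0 x) 0
      rw [hh, Pi.mulSingle_eq_same] at h0
      rw [h0, he, Pi.mulSingle_eq_same]
    · have hj : (ρ h).symm i ≠ 0 := by
        intro hc
        apply hi
        rw [← hh, ← hc, Equiv.apply_symm_apply]
      have h1 : (Pi.mulSingle 0 x : Fin m → X) ((ρ h).symm i) = 1 :=
        by rw [Pi.mulSingle_eq_of_ne hj]
      conv_lhs => rw [← Equiv.apply_symm_apply (ρ h) i]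
      rw [F_apply φ ρ hfactor, h1, F_one, Pi.mulSingle_eq_of_ne hi]

end Stmt13Aux

open Stmt13Aux

/-- Let the elementary abelian `p`-group `H` act on `Y = X^m` by automorphisms permuting the
`m` factors transitively, `I ≤ H`, `H' = N_H(X)`, `I' = N_I(X) = I ⊓ H'`, and let
`k = |H:H'|/|I:I'|` be the number of `I`-orbits on the factors. Then `C_Y(I) ⊋ C_Y(H)` iff
either (`k = 1` and `C_X(I') ⊋ C_X(H')`) or (`k > 1` and `C_X(I') ≠ 1`). -/
theorem stmt13 (p m : ℕ) [Fact p.Prime] [NeZero m]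
    {X : Type*} [Group X] [Finite X]
    {H : Type*} [CommGroup H] [Finite H] (helem : ∀ h : H, h ^ p = 1)
    (φ : H →* MulAut (Fin m → X)) (ρ : H →* Equiv.Perm (Fin m))
    (hfactor : ∀ (h : H) (y y' : Fin m → X) (i : Fin m),
      y i = y' i → φ h y (ρ h i) = φ h y' (ρ h i))
    (htrans : ∀ i j : Fin m, ∃ h : H, ρ h i = j)
    (H' : Subgroup H) (hH' : ∀ h : H, h ∈ H' ↔ ρ h 0 = 0)
    (I : Subgroup H) :
    ({y : Fin m → X | ∀ h : H, φ h y = y} ⊂ {y : Fin m → X | ∀ h ∈ I, φ h y = y}) ↔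
      ((H'.index / H'.relIndex I = 1 ∧
          {x : X | ∀ h ∈ H', φ h (Pi.mulSingle 0 x) = Pi.mulSingle 0 x} ⊂
            {x : X | ∀ h ∈ I ⊓ H', φ h (Pi.mulSingle 0 x) = Pi.mulSingle 0 x}) ∨
        (1 < H'.index / H'.relIndex I ∧
          {x : X | ∀ h ∈ I ⊓ H', φ h (Pi.mulSingle 0 x) = Pi.mulSingle 0 x} ≠ {1})) := by
  classical
  set O : Set (Fin m) := {j : Fin m | ∃ a ∈ I, ρ a 0 = j} with hOdef
  -- index bookkeeping
  letI : MulAction H (Fin m) := MulAction.compHom _ ρ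
  have hsmul : ∀ (h : H) (i : Fin m), h • i = ρ h i := fun _ _ => rfl
  have hstabH : MulAction.stabilizer H (0 : Fin m) = H' := by
    ext h; rw [MulAction.mem_stabilizer_iff, hsmul, hH']
  have horbH : MulAction.orbit H (0 : Fin m) = Set.univ := by
    rw [Set.eq_univ_iff_forall]; intro j
    obtain ⟨h, hh⟩ := htrans 0 j
    exact ⟨h, hh⟩
  have hidx : H'.index = m := by
    rw [← hstabH, MulAction.index_stabilizer, horbH, Set.ncard_univ, Nat.card_eq_fintype_card,
      Fintype.card_fin]
  have hstabI : MulAction.stabilizer I (0 : Fin m) = H'.subgroupOf I := by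
    ext a
    rw [MulAction.mem_stabilizer_iff, Subgroup.mem_subgroupOf, hH']
    show (a : H) • (0 : Fin m) = 0 ↔ _
    rw [hsmul]
  have hrel : H'.relIndex I = O.ncard := by
    rw [Subgroup.relIndex, ← hstabI, MulAction.index_stabilizer]
    congr 1
    ext j
    constructor
    · rintro ⟨⟨a, haI⟩, rfl⟩; exact ⟨a, haI, rfl⟩
    · rintro ⟨a, haI, rfl⟩; exact ⟨⟨a, haI⟩, rfl⟩
  have hO0 : (0 : Fin m) ∈ O := ⟨1, I.one_mem, by simp⟩
  have hdpos : 0 < O.ncard := (Set.ncard_pos (Set.toFinite O)).mpr ⟨0, hO0⟩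
  have hdvd : O.ncard ∣ m := by
    rw [← hrel, ← hidx]; exact Subgroup.relIndex_dvd_index_of_normal H' I
  obtain ⟨t, ht⟩ := hdvd
  have hmne : m ≠ 0 := NeZero.ne m
  have hk : H'.index / H'.relIndex I = t := by
    rw [hidx, hrel]
    rw [Nat.div_eq_of_eq_mul_left hdpos (ht.trans (mul_comm _ _))]
  have htpos : 0 < t := by
    rcases Nat.eq_zero_or_pos t with h0 | h; · exact absurd (ht.trans (by rw [h0, mul_zero])) hmne
    exact h
  have heq1 : t = 1 ↔ O = Set.univ := by
    constructor
    · intro h1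
      subst h1
      refine Set.eq_of_subset_of_ncard_le (Set.subset_univ O) ?_ Set.finite_univ
      rw [Set.ncard_univ, Nat.card_eq_fintype_card, Fintype.card_fin]
      omega
    · intro hu
      have hOm : O.ncard = m := by
        rw [hu, Set.ncard_univ, Nat.card_eq_fintype_card, Fintype.card_fin]
      have h2 : m = m * t := ht.trans (by rw [hOm])
      exact (Nat.eq_of_mul_eq_mul_left (Nat.pos_of_ne_zero hmne)
        (by rw [mul_one]; exact h2)).symm
  have hne1 : 1 < t ↔ O ≠ Set.univ := by
    constructor
    · intro hlt hu
      have := heq1.mpr hu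
      omega
    · intro hu
      rcases Nat.lt_or_ge 1 t with h | h
      · exact h
      · have h1 : t = 1 := by omega
        exact absurd (heq1.mp h1) hu
  -- fixed-point translations
  have Fmul := F_mul φ ρ hfactor
  have Finj := F_injective φ ρ hfactor
  have Ffix := fix_iff φ ρ hfactor
  have Fsingle := single_fix_iff φ ρ hfactor
  have key : ∀ b c : H, ρ (b * c) 0 = ρ b 0 → ρ c 0 = 0 := by
    intro b c hbc
    rw [map_mul, Equiv.Perm.mul_apply] at hbc
    exact (ρ b).injective hbc
  -- subsets
  have hsub1 : {y : Fin m → X | ∀ h : H, φ h y = y} ⊆ {y : Fin m → X | ∀ h ∈ I, φ h y = y} :=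
    fun y hy h _ => hy h
  have hsub2 : {x : X | ∀ h ∈ H', φ h (Pi.mulSingle 0 x) = Pi.mulSingle 0 x} ⊆
      {x : X | ∀ h ∈ I ⊓ H', φ h (Pi.mulSingle 0 x) = Pi.mulSingle 0 x} :=
    fun x hx h hh => hx h (Subgroup.mem_inf.mp hh).2
  have hone : (1 : X) ∈ {x : X | ∀ h ∈ I ⊓ H', φ h (Pi.mulSingle 0 x) = Pi.mulSingle 0 x} := by
    intro h _
    rw [Pi.mulSingle_one, map_one]
  rw [Set.ssubset_iff_of_subset hsub1, Set.ssubset_iff_of_subset hsub2, hk]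
  constructor
  · rintro ⟨y, hyB, hyA⟩
    simp only [Set.mem_setOf_eq] at hyB hyA
    have hyI : ∀ h ∈ I, ∀ j, F φ ρ h j (y j) = y (ρ h j) := fun h hh => (Ffix h y).mp (hyB h hh)
    rcases eq_or_ne t 1 with h1 | h1
    · -- k = 1 : transitive I
      left
      refine ⟨h1, y 0, ?_, ?_⟩
      · intro h hh
        obtain ⟨hI, hHmem⟩ := Subgroup.mem_inf.mp hh
        have hh0 : ρ h 0 = 0 := (hH' h).mp hHmem
        rw [Fsingle h hh0]
        have := hyI h hI 0
        rwa [hh0] at this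
      · intro hx
        simp only [Set.mem_setOf_eq] at hx
        apply hyA
        have hOu : O = Set.univ := heq1.mp h1
        have hItr : ∀ j : Fin m, ∃ a ∈ I, ρ a 0 = j := by
          intro j
          have hj : j ∈ O := by rw [hOu]; trivial
          exact hj
        intro h
        rw [Ffix h y]
        intro j
        obtain ⟨a, haI, haj⟩ := hItr j
        obtain ⟨b, hbI, hbj⟩ := hItr (ρ h j)
        set c := b⁻¹ * (h * a) with hc
        have hc0 : ρ c 0 = 0 := by
          refine key b c ?_
          rw [show b * c = h * a from by rw [hc]; group, map_mul, Equiv.Perm.mul_apply, haj, hbj]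
        have hcH : c ∈ H' := (hH' c).mpr hc0
        have hcx : F φ ρ c 0 (y 0) = y 0 := by
          have := hx c hcH
          rwa [Fsingle c hc0] at this
        have hya : F φ ρ a 0 (y 0) = y j := by rw [hyI a haI 0, haj]
        have e1 : F φ ρ h j (y j) = F φ ρ (h * a) 0 (y 0) := by
          rw [Fmul h a 0, haj, hya]
        have e2 : F φ ρ (h * a) 0 (y 0) = F φ ρ b 0 (y 0) := by
          have hba : h * a = b * c := by rw [hc]; group
          rw [hba, Fmul b c 0, hc0, hcx]
        rw [e1, e2, hyI b hbI 0, hbj]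
    · -- k > 1
      right
      have hlt : 1 < t := lt_of_le_of_ne htpos (Ne.symm h1)
      refine ⟨hlt, ?_⟩
      have hyne : ∃ j, y j ≠ 1 := by
        by_contra hc
        push_neg at hc
        have hy1 : y = (1 : Fin m → X) := funext fun j => hc j
        exact hyA fun h => by rw [hy1, map_one]
      obtain ⟨j, hj⟩ := hyne
      obtain ⟨h₀, hh₀⟩ := htrans 0 j
      have hinv : ρ h₀⁻¹ j = 0 := by rw [← hh₀]; simp
      set x := F φ ρ h₀⁻¹ j (y j) with hxdef
      have hxne : x ≠ 1 := F_ne_one φ ρ hfactor h₀⁻¹ j hj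
      intro hset
      have hxmem : x ∈ {x : X | ∀ h ∈ I ⊓ H', φ h (Pi.mulSingle 0 x) = Pi.mulSingle 0 x} := by
        intro c hcmem
        obtain ⟨hcI, hcH⟩ := Subgroup.mem_inf.mp hcmem
        have hc0 : ρ c 0 = 0 := (hH' c).mp hcH
        rw [Fsingle c hc0]
        have hcj : ρ c j = j := by
          have comm : ρ c (ρ h₀ 0) = ρ h₀ (ρ c 0) := by
            rw [← Equiv.Perm.mul_apply, ← map_mul, mul_comm, map_mul, Equiv.Perm.mul_apply]
          rw [hh₀] at comm
          rw [comm, hc0, hh₀]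
        calc F φ ρ c 0 x = F φ ρ c (ρ h₀⁻¹ j) (F φ ρ h₀⁻¹ j (y j)) := by rw [hinv, hxdef]
          _ = F φ ρ (c * h₀⁻¹) j (y j) := (Fmul c h₀⁻¹ j (y j)).symm
          _ = F φ ρ (h₀⁻¹ * c) j (y j) := by rw [mul_comm]
          _ = F φ ρ h₀⁻¹ (ρ c j) (F φ ρ c j (y j)) := Fmul h₀⁻¹ c j (y j)
          _ = x := by rw [hyI c hcI j, hcj, hxdef]
      rw [hset] at hxmem
      exact hxne hxmem
  · rintro (⟨h1, x, hxmem, hxH⟩ | ⟨hlt, hne⟩)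
    · -- k = 1
      simp only [Set.mem_setOf_eq] at hxmem hxH
      have hOu : O = Set.univ := heq1.mp h1
      have hItr : ∀ j : Fin m, ∃ a ∈ I, ρ a 0 = j := by
        intro j
        have hj : j ∈ O := by rw [hOu]; trivial
        exact hj
      choose a haI haj using hItr
      have hxI' : ∀ c, c ∈ I → ρ c 0 = 0 → F φ ρ c 0 x = x := fun c hcI hc0 => by
        have := hxmem c (Subgroup.mem_inf.mpr ⟨hcI, (hH' c).mpr hc0⟩)
        rwa [Fsingle c hc0] at this
      set y : Fin m → X := fun j => F φ ρ (a j) 0 x with hydef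
      have hyj : ∀ j, y j = F φ ρ (a j) 0 x := fun j => rfl
      refine ⟨y, ?_, ?_⟩
      · simp only [Set.mem_setOf_eq]
        intro h hhI
        rw [Ffix]
        intro j
        set c := (a (ρ h j))⁻¹ * (h * a j) with hc
        have hcI : c ∈ I := I.mul_mem (I.inv_mem (haI _)) (I.mul_mem hhI (haI j))
        have hc0 : ρ c 0 = 0 := by
          refine key (a (ρ h j)) c ?_
          rw [show a (ρ h j) * c = h * a j from by rw [hc]; group, map_mul,
            Equiv.Perm.mul_apply, haj j, haj (ρ h j)]
        have hba : h * a j = a (ρ h j) * c := by rw [hc]; group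
        calc F φ ρ h j (y j)
            = F φ ρ (h * a j) 0 x := by rw [hyj j, Fmul h (a j) 0 x, haj j]
          _ = F φ ρ (a (ρ h j)) 0 (F φ ρ c 0 x) := by rw [hba, Fmul, hc0]
          _ = y (ρ h j) := by rw [hxI' c hcI hc0, hyj]
      · intro hA
        simp only [Set.mem_setOf_eq] at hA
        apply hxH
        intro h hhH'
        have hh0 : ρ h 0 = 0 := (hH' h).mp hhH'
        rw [Fsingle h hh0]
        have h0 : y 0 = x := (hyj 0).trans (hxI' (a 0) (haI 0) (haj 0))
        have hfix := (Ffix h y).mp (hA h) 0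
        rwa [hh0, h0] at hfix
    · -- k > 1
      obtain ⟨j₀, hj₀⟩ : ∃ j₀, j₀ ∉ O := by
        by_contra hc; push_neg at hc
        exact (hne1.mp hlt) (Set.eq_univ_iff_forall.mpr hc)
      obtain ⟨x, hxmem, hxne⟩ :
          ∃ x ∈ {x : X | ∀ h ∈ I ⊓ H', φ h (Pi.mulSingle 0 x) = Pi.mulSingle 0 x}, x ≠ 1 := by
        by_contra hc; push_neg at hc
        exact hne (Set.eq_singleton_iff_unique_mem.mpr ⟨hone, fun z hz => hc z hz⟩)
      simp only [Set.mem_setOf_eq] at hxmem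
      have hxI' : ∀ c, c ∈ I → ρ c 0 = 0 → F φ ρ c 0 x = x := fun c hcI hc0 => by
        have := hxmem c (Subgroup.mem_inf.mpr ⟨hcI, (hH' c).mpr hc0⟩)
        rwa [Fsingle c hc0] at this
      set y : Fin m → X := fun j =>
        if hj : ∃ a, a ∈ I ∧ ρ a 0 = j then F φ ρ hj.choose 0 x else 1 with hydef
      have hyval : ∀ (j : Fin m) (a' : H), a' ∈ I → ρ a' 0 = j → y j = F φ ρ a' 0 x := by
        intro j a' haI' haj'
        have hjO : ∃ a, a ∈ I ∧ ρ a 0 = j := ⟨a', haI', haj'⟩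
        simp only [hydef, dif_pos hjO]
        obtain ⟨hbI, hbj⟩ := hjO.choose_spec
        set b := hjO.choose with hb
        have hcI : b⁻¹ * a' ∈ I := I.mul_mem (I.inv_mem hbI) haI'
        have hc0 : ρ (b⁻¹ * a') 0 = 0 := by
          refine key b (b⁻¹ * a') ?_
          rw [show b * (b⁻¹ * a') = a' from by group, haj', hbj]
        have hba : a' = b * (b⁻¹ * a') := by group
        conv_rhs => rw [hba]
        rw [Fmul b (b⁻¹ * a') 0, hc0, hxI' _ hcI hc0]
      have hyO : ∀ j : Fin m, j ∉ O → y j = 1 := by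
        intro j hj
        have hno : ¬ ∃ a, a ∈ I ∧ ρ a 0 = j := by
          rintro ⟨a', ha1, ha2⟩
          exact hj ⟨a', ha1, ha2⟩
        simp only [hydef, dif_neg hno]
      refine ⟨y, ?_, ?_⟩
      · simp only [Set.mem_setOf_eq]
        intro h hhI
        rw [Ffix]
        intro j
        by_cases hjO : j ∈ O
        · obtain ⟨a', haI', haj'⟩ := hjO
          have h2 : ρ (h * a') 0 = ρ h j := by rw [map_mul, Equiv.Perm.mul_apply, haj']
          rw [hyval j a' haI' haj', hyval (ρ h j) (h * a') (I.mul_mem hhI haI') h2,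
            Fmul h a' 0, haj']
        · have hj2 : ρ h j ∉ O := by
            rintro ⟨a', haI', haj'⟩
            refine hjO ⟨h⁻¹ * a', I.mul_mem (I.inv_mem hhI) haI', ?_⟩
            rw [map_mul, map_inv, Equiv.Perm.mul_apply, haj']
            simp
          rw [hyO j hjO, hyO _ hj2, F_one]
      · intro hA
        simp only [Set.mem_setOf_eq] at hA
        obtain ⟨h₀, hh₀⟩ := htrans 0 j₀
        have hfix := (Ffix h₀ y).mp (hA h₀) 0
        rw [hh₀, hyval 0 1 I.one_mem (by simp), F_id φ ρ, hyO j₀ hj₀] at hfix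
        exact hxne (Finj h₀ 0 (hfix.trans (F_one φ ρ h₀ 0).symm))
end

section
/- Let G = K ⋊ H with H = (ℤ/p)^r, K a p'-group, and suppose there exist elements c_i ∈ C_K(H_i) \ C_K(H) for i = 1,…,r, where H₁,…,H_r are r linearly independent hyperplanes of H, such that the c_i pairwise commute and c_i ∉ C_K(H) for all i. Then the set S = { (c₁^{δ₁}⋯c_r^{δ_r}) H (c₁^{δ₁}⋯c_r^{δ_r})⁻¹ : δ_i ∈ {0,1} } of conjugates of H has exactly 2^r elements. -/
private lemma aux_split {G : Type*} [Group G] : ∀ {n : ℕ} (t : Fin n → G) (j : Fin n) (h : G),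
    (∀ i i', Commute (t i) (t i')) → (∀ i, i ≠ j → Commute (t i) h) →
    ∃ u, (List.ofFn t).prod = t j * u ∧ Commute u h := by
  intro n
  induction n with
  | zero => exact fun t j => j.elim0
  | succ n ih =>
    intro t j h hc hh
    induction j using Fin.cases with
    | zero =>
      refine ⟨(List.ofFn (t ∘ Fin.succ)).prod, by rw [List.ofFn_succ, List.prod_cons]; rfl, ?_⟩
      refine Commute.list_prod_left _ _ fun x hx => ?_
      rw [List.mem_ofFn] at hx
      obtain ⟨i, rfl⟩ := hx
      exact hh _ (Fin.succ_ne_zero i)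
    | succ j' =>
      obtain ⟨u, hu, hcu⟩ := ih (t ∘ Fin.succ) j' h (fun i i' => hc _ _)
        (fun i hi => hh i.succ (fun hcon => hi (Fin.succ_injective n hcon)))
      refine ⟨t 0 * u, ?_, (hh 0 (Fin.succ_ne_zero j').symm).mul_left hcu⟩
      rw [List.ofFn_succ, List.prod_cons]
      show t 0 * (List.ofFn (t ∘ Fin.succ)).prod = _
      rw [hu]
      show t 0 * (t j'.succ * u) = _
      rw [← mul_assoc, (hc 0 j'.succ).eq, mul_assoc]

private lemma conj_formula {G : Type*} [Group G] {n : ℕ} (t : Fin n → G) (j : Fin n) (h : G)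
    (hc : ∀ i i', Commute (t i) (t i')) (hh : ∀ i, i ≠ j → Commute (t i) h) :
    (List.ofFn t).prod * h * ((List.ofFn t).prod)⁻¹ = t j * h * (t j)⁻¹ := by
  obtain ⟨u, hu, hcu⟩ := aux_split t j h hc hh
  rw [hu]
  have : u * h * u⁻¹ = h := by rw [hcu.eq, mul_inv_cancel_right]
  calc t j * u * h * (t j * u)⁻¹ = t j * (u * h * u⁻¹) * (t j)⁻¹ := by group
    _ = t j * h * (t j)⁻¹ := by rw [this]

/-- Let `G = K ⋊ H` with `H` elementary abelian of order `p^r`, `K` a `p'`-group, `H₁,…,H_r`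
linearly independent hyperplanes of `H`, and let `cᵢ ∈ C_K(Hᵢ) \ C_K(H)` pairwise commute.
Then the set `S = { (c₁^{δ₁}⋯c_r^{δ_r}) H (c₁^{δ₁}⋯c_r^{δ_r})⁻¹ : δᵢ ∈ {0,1} }` of conjugates
of `H` has exactly `2^r` elements. -/
theorem stmt15 {G : Type*} [Group G] [Finite G] (p r : ℕ) [Fact p.Prime]
    (K H : Subgroup G) (hKn : K.Normal) (hdisj : K ⊓ H = ⊥) (hsup : K ⊔ H = ⊤)
    (hHcard : Nat.card H = p ^ r) (helem : ∀ x ∈ H, x ^ p = 1)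
    (hHab : ∀ a ∈ H, ∀ b ∈ H, a * b = b * a)
    (hK' : ¬ p ∣ Nat.card K)
    (Hs : Fin r → Subgroup G) (hHsH : ∀ i, Hs i ≤ H)
    (hHsidx : ∀ i, (Hs i).relIndex H = p) (hindep : (⨅ i, Hs i) ⊓ H = ⊥)
    (c : Fin r → G) (hcK : ∀ i, c i ∈ K)
    (hcC : ∀ i, c i ∈ Subgroup.centralizer ((Hs i : Subgroup G) : Set G))
    (hcH : ∀ i, c i ∉ Subgroup.centralizer (H : Set G))
    (hcomm : ∀ i j, Commute (c i) (c j)) :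
    Nat.card {P : Subgroup G // ∃ δ : Fin r → Bool,
        P = H.map (MulAut.conj ((List.ofFn fun i => if δ i then c i else 1).prod)).toMonoidHom} =
      2 ^ r := by
  classical
  have hp : p.Prime := Fact.out
  set g : (Fin r → Bool) → G := fun δ => (List.ofFn fun i => if δ i then c i else 1).prod with hg
  set f : (Fin r → Bool) → Subgroup G :=
    fun δ => H.map (MulAut.conj (g δ)).toMonoidHom with hf
  have hginK : ∀ δ, g δ ∈ K := by
    intro δ
    refine Subgroup.list_prod_mem K fun x hx => ?_
    rw [List.mem_ofFn] at hx
    obtain ⟨i, rfl⟩ := hx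
    by_cases h : δ i <;> simp [h, hcK i, one_mem]
  have htc : ∀ (δ : Fin r → Bool) (i i' : Fin r),
      Commute (if δ i then c i else 1) (if δ i' then c i' else 1) := by
    intro δ i i'
    by_cases h : δ i <;> by_cases h' : δ i' <;> simp [h, h', hcomm]
  have hinj : Function.Injective f := by
    intro δ ε hde
    by_contra hne
    obtain ⟨j, hj⟩ : ∃ j, δ j ≠ ε j := by
      by_contra hcon
      push_neg at hcon
      exact hne (funext hcon)
    -- find h0 ∈ H, h0 ≠ 1, h0 ∈ Hs i for all i ≠ j
    set M : Subgroup G := ⨅ i, (if i = j then H else Hs i) with hM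
    have hrel : M.relIndex H ≤ p ^ (r - 1) := by
      calc M.relIndex H ≤ ∏ i, ((if i = j then H else Hs i).relIndex H) :=
            Subgroup.relIndex_iInf_le _
        _ = p ^ (r - 1) := by
            rw [← Finset.mul_prod_erase Finset.univ _ (Finset.mem_univ j)]
            rw [if_pos rfl, Subgroup.relIndex_self]
            rw [Finset.prod_congr rfl (fun i hi => by
              rw [if_neg (Finset.ne_of_mem_erase hi), hHsidx i])]
            rw [Finset.prod_const, one_mul, Finset.card_erase_of_mem (Finset.mem_univ j),
              Finset.card_univ, Fintype.card_fin]
    have hmul : M.relIndex H * Nat.card (M.subgroupOf H) = p ^ r := by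
      rw [← hHcard]
      exact Subgroup.index_mul_card (M.subgroupOf H)
    have hnontriv : M.subgroupOf H ≠ ⊥ := by
      intro hbot
      rw [hbot] at hmul
      simp only [Subgroup.card_bot, mul_one] at hmul
      have : p ^ r ≤ p ^ (r - 1) := hmul ▸ hrel
      have hlt : p ^ (r - 1) < p ^ r :=
        Nat.pow_lt_pow_right hp.one_lt (Nat.sub_lt j.pos Nat.one_pos)
      omega
    obtain ⟨x, hxmem, hxne⟩ :=
      (Subgroup.nontrivial_iff_exists_ne_one _).mp
        ((Subgroup.nontrivial_iff_ne_bot _).mpr hnontriv)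
    set h0 : G := (x : G) with hh0
    have hh0H : h0 ∈ H := x.2
    have hh0ne : h0 ≠ 1 := fun hcon => hxne (Subtype.ext hcon)
    have hh0M : h0 ∈ M := Subgroup.mem_subgroupOf.mp hxmem
    have hh0i : ∀ i, i ≠ j → h0 ∈ Hs i := by
      intro i hi
      have := (Subgroup.mem_iInf.mp hh0M) i
      rwa [if_neg hi] at this
    have hh0j : h0 ∉ Hs j := by
      intro hcon
      have : h0 ∈ (⨅ i, Hs i) ⊓ H := by
        refine ⟨Subgroup.mem_iInf.mpr fun i => ?_, hh0H⟩
        by_cases hij : i = j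
        · exact hij ▸ hcon
        · exact hh0i i hij
      rw [hindep] at this
      exact hh0ne this
    -- key conjugation equality
    have hkey : g δ * h0 * (g δ)⁻¹ = g ε * h0 * (g ε)⁻¹ := by
      have hmem : g δ * h0 * (g δ)⁻¹ ∈ f ε := by
        rw [← hde]
        exact ⟨h0, hh0H, by simp [MulAut.conj_apply]⟩
      obtain ⟨y, hyH, hy⟩ := hmem
      simp only [MulEquiv.coe_toMonoidHom, MulAut.conj_apply] at hy
      set d : G := (g ε)⁻¹ * g δ with hd
      have hdK : d ∈ K := mul_mem (inv_mem (hginK ε)) (hginK δ)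
      have hyd : y = d * h0 * d⁻¹ := by
        calc y = (g ε)⁻¹ * (g ε * y * (g ε)⁻¹) * g ε := by group
          _ = (g ε)⁻¹ * (g δ * h0 * (g δ)⁻¹) * g ε := by rw [hy]
          _ = d * h0 * d⁻¹ := by rw [hd]; group
      have hz : d * h0 * d⁻¹ * h0⁻¹ ∈ K ⊓ H := by
        rw [Subgroup.mem_inf]
        refine ⟨?_, ?_⟩
        · have h1 : h0 * d⁻¹ * h0⁻¹ ∈ K := hKn.conj_mem d⁻¹ (K.inv_mem hdK) h0
          have heq : d * h0 * d⁻¹ * h0⁻¹ = d * (h0 * d⁻¹ * h0⁻¹) := by group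
          rw [heq]
          exact K.mul_mem hdK h1
        · rw [← hyd]
          exact H.mul_mem (show y ∈ H from hyH) (H.inv_mem hh0H)
      rw [hdisj, Subgroup.mem_bot] at hz
      have hdc : d * h0 * d⁻¹ = h0 := by
        calc d * h0 * d⁻¹ = d * h0 * d⁻¹ * h0⁻¹ * h0 := by
              rw [inv_mul_cancel_right]
          _ = h0 := by rw [hz, one_mul]
      rw [hd] at hdc
      calc g δ * h0 * (g δ)⁻¹ = g ε * ((g ε)⁻¹ * g δ * h0 * ((g ε)⁻¹ * g δ)⁻¹) * (g ε)⁻¹ := by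
            group
        _ = g ε * h0 * (g ε)⁻¹ := by rw [hdc]
    -- apply conj_formula both sides
    have hhδ : ∀ i, i ≠ j → Commute (if δ i then c i else 1) h0 := by
      intro i hi
      by_cases h : δ i
      · simpa [h] using (show Commute (c i) h0 from ((hcC i) h0 (hh0i i hi)).symm)
      · simp [h]
    have hhε : ∀ i, i ≠ j → Commute (if ε i then c i else 1) h0 := by
      intro i hi
      by_cases h : ε i
      · simpa [h] using (show Commute (c i) h0 from ((hcC i) h0 (hh0i i hi)).symm)
      · simp [h]
    have hfδ := conj_formula (fun i => if δ i then c i else 1) j h0 (htc δ) hhδ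
    have hfε := conj_formula (fun i => if ε i then c i else 1) j h0 (htc ε) hhε
    rw [hg] at hkey
    rw [hfδ, hfε] at hkey
    beta_reduce at hkey
    have hcm : Commute (c j) h0 := by
      cases hδj : δ j <;> cases hεj : ε j <;> rw [hδj, hεj] at hkey hj
      · exact absurd rfl hj
      · simp only [if_true, Bool.false_eq_true, if_false, inv_one, mul_one, one_mul] at hkey
        have h2 : c j * h0 * (c j)⁻¹ = h0 := hkey.symm
        rw [mul_inv_eq_iff_eq_mul] at h2
        exact h2
      · simp only [if_true, Bool.false_eq_true, if_false, inv_one, mul_one, one_mul] at hkey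
        rw [mul_inv_eq_iff_eq_mul] at hkey
        exact hkey
      · exact absurd rfl hj
    -- c j centralizes H : contradiction
    apply hcH j
    have hsub : Hs j ⊔ Subgroup.zpowers h0 ≤ Subgroup.centralizer {c j} := by
      refine sup_le ?_ ?_
      · intro a ha
        rw [Subgroup.mem_centralizer_iff]
        intro s hs
        rw [Set.mem_singleton_iff] at hs
        subst hs
        exact ((hcC j) a ha).symm
      · rw [Subgroup.zpowers_le]
        rw [Subgroup.mem_centralizer_iff]
        intro s hs
        rw [Set.mem_singleton_iff] at hs
        subst hs
        exact hcm
    have hHle : H ≤ Hs j ⊔ Subgroup.zpowers h0 := by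
      set M0 : Subgroup G := (Hs j ⊔ Subgroup.zpowers h0) ⊓ H with hM0
      have h1 : Hs j ≤ M0 := le_inf le_sup_left (hHsH j)
      have h2 : M0 ≤ H := inf_le_right
      have h3 : (Hs j).relIndex M0 * M0.relIndex H = p :=
        (Subgroup.relIndex_mul_relIndex _ _ _ h1 h2).trans (hHsidx j)
      have hh0M0 : h0 ∈ M0 :=
        ⟨(le_sup_right : Subgroup.zpowers h0 ≤ Hs j ⊔ Subgroup.zpowers h0)
          (Subgroup.mem_zpowers h0), hh0H⟩
      have h4 : (Hs j).relIndex M0 ≠ 1 := by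
        intro h1eq
        rw [Subgroup.relIndex_eq_one] at h1eq
        exact hh0j (h1eq hh0M0)
      have h5 : M0.relIndex H = 1 := by
        have hdvd : (Hs j).relIndex M0 ∣ p := ⟨_, h3.symm⟩
        rcases (hp.eq_one_or_self_of_dvd _ hdvd) with h | h
        · exact absurd h h4
        · rw [h] at h3
          exact mul_left_cancel₀ (a := p) hp.ne_zero (h3.trans (mul_one p).symm)
      rw [Subgroup.relIndex_eq_one] at h5
      exact le_trans h5 inf_le_left
    rw [Subgroup.mem_centralizer_iff]
    intro s hs
    have := hsub (hHle hs)
    rw [Subgroup.mem_centralizer_iff] at this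
    exact (this (c j) rfl).symm
  -- cardinality computation
  have hset : {P : Subgroup G | ∃ δ : Fin r → Bool, P = f δ} = Set.range f := by
    ext P
    simp only [Set.mem_setOf_eq, Set.mem_range]
    exact ⟨fun ⟨δ, hδ⟩ => ⟨δ, hδ.symm⟩, fun ⟨δ, hδ⟩ => ⟨δ, hδ.symm⟩⟩
  calc Nat.card {P : Subgroup G // ∃ δ : Fin r → Bool, P = f δ}
      = Nat.card (Set.range f) := by rw [← hset]; rfl
    _ = Nat.card (Fin r → Bool) := Nat.card_range_of_injective hinj
    _ = 2 ^ r := by simp [Nat.card_eq_fintype_card]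
end

section
/- Let G = K ⋊ H with H = (ℤ/p)^r and K a p'-group, let H₁,…,H_r be linearly independent hyperplanes of H, and let c₁,…,c_r ∈ K be pairwise commuting elements with c_i ∈ C_K(H_i) \ C_K(H). Define S = { c^δ H (c^δ)⁻¹ : δ ∈ {0,1}^r } where c^δ = c₁^{δ₁}⋯c_r^{δ_r}. Then for every i ∈ {1,…,r} and every k ∈ K, the number of elements of S containing the conjugate k H_i k⁻¹ is even. -/
open Subgroup Function
open scoped commutatorElement

private lemma ofFn_extract {G : Type*} [Group G] :
    ∀ {n : ℕ} (g : Fin n → G), (∀ a b, Commute (g a) (g b)) → ∀ (i : Fin n),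
      (List.ofFn g).prod = g i * (List.ofFn (Function.update g i 1)).prod := by
  intro n
  induction n with
  | zero => exact fun g _ i => i.elim0
  | succ m ih =>
    intro g hg i
    rw [List.ofFn_succ, List.ofFn_succ, List.prod_cons, List.prod_cons]
    induction i using Fin.cases with
    | zero =>
      have h1 : Function.update g 0 1 0 = 1 := Function.update_self _ _ _
      have h2 : (fun j : Fin m => Function.update g 0 1 j.succ) = fun j => g j.succ := by
        funext j; exact Function.update_of_ne (Fin.succ_ne_zero j) _ _
      rw [h1, h2, one_mul]
    | succ i =>
      have h1 : Function.update g i.succ 1 0 = g 0 :=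
        Function.update_of_ne (Fin.succ_ne_zero i).symm _ _
      have h2 : (fun j : Fin m => Function.update g i.succ 1 j.succ)
          = Function.update (fun j => g j.succ) i 1 := by
        funext j
        by_cases hj : j = i
        · subst hj; simp
        · rw [Function.update_of_ne hj, Function.update_of_ne (fun h => hj (Fin.succ_injective _ h))]
      rw [h1, h2, ih (fun j => g j.succ) (fun a b => hg _ _) i, ← mul_assoc, ← mul_assoc,
        (hg 0 i.succ).eq]

/-- If `w ∈ K`, `h ∈ H`, `K` normal with `K ⊓ H = ⊥`, and `w h w⁻¹ ∈ H`, then `w` and `h`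
commute. -/
private lemma aux_comm {G : Type*} [Group G] (K H : Subgroup G) (hKn : K.Normal)
    (hdisj : K ⊓ H = ⊥) {w h : G} (hw : w ∈ K) (hh : h ∈ H)
    (hcon : w * h * w⁻¹ ∈ H) : Commute w h := by
  rw [← commutatorElement_eq_one_iff_commute]
  have h1 : ⁅w, h⁆ ∈ K := by
    have h2 : h * w⁻¹ * h⁻¹ ∈ K := by
      have := hKn.conj_mem w⁻¹ (K.inv_mem hw) h
      simpa [mul_assoc] using this
    have h3 : w * (h * w⁻¹ * h⁻¹) ∈ K := K.mul_mem hw h2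
    simpa [commutatorElement_def, mul_assoc] using h3
  have h2 : ⁅w, h⁆ ∈ H := by
    have := H.mul_mem hcon (H.inv_mem hh)
    simpa [commutatorElement_def, mul_assoc] using this
  have : ⁅w, h⁆ ∈ K ⊓ H := ⟨h1, h2⟩
  rwa [hdisj, Subgroup.mem_bot] at this

/-- Conjugate of a subgroup of `H` by `k` lies in the conjugate of `H` by `g` iff `g⁻¹ k`
centralizes it. -/
private lemma aux_le_iff {G : Type*} [Group G] (K H : Subgroup G) (hKn : K.Normal)
    (hdisj : K ⊓ H = ⊥) (Hsi : Subgroup G) (hHsi : Hsi ≤ H) {g k : G}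
    (hg : g ∈ K) (hk : k ∈ K) :
    Hsi.map (MulAut.conj k).toMonoidHom ≤ H.map (MulAut.conj g).toMonoidHom ↔
      g⁻¹ * k ∈ Subgroup.centralizer (Hsi : Set G) := by
  constructor
  · intro hle
    rw [Subgroup.mem_centralizer_iff]
    intro h hh
    have hmem : (MulAut.conj k).toMonoidHom h ∈ H.map (MulAut.conj g).toMonoidHom :=
      hle (Subgroup.mem_map_of_mem _ hh)
    rw [Subgroup.mem_map] at hmem
    obtain ⟨h', hh', he⟩ := hmem
    simp only [MulEquiv.coe_toMonoidHom, MulAut.conj_apply] at he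
    have hwK : g⁻¹ * k ∈ K := K.mul_mem (K.inv_mem hg) hk
    have hconj : (g⁻¹ * k) * h * (g⁻¹ * k)⁻¹ ∈ H := by
      have e1 : (g⁻¹ * k) * h * (g⁻¹ * k)⁻¹ = g⁻¹ * (k * h * k⁻¹) * g := by group
      have e2 : g⁻¹ * (g * h' * g⁻¹) * g = h' := by group
      rw [e1, ← he, e2]
      exact hh'
    exact (aux_comm K H hKn hdisj hwK (hHsi hh) hconj).symm.eq
  · intro hc
    intro x hx
    rw [Subgroup.mem_map] at hx ⊢
    obtain ⟨h, hh, rfl⟩ := hx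
    refine ⟨h, hHsi hh, ?_⟩
    simp only [MulEquiv.coe_toMonoidHom, MulAut.conj_apply]
    have e := Subgroup.mem_centralizer_iff.mp hc h hh
    -- e : h * (g⁻¹ * k) = (g⁻¹ * k) * h ; deduce g h g⁻¹ = k h k⁻¹
    have e2 := congrArg (fun x => g * x * k⁻¹) e
    simp only [mul_assoc] at e2 ⊢
    simpa [mul_assoc] using e2

/-- dual elements: for each `j` there is `h ∈ H` lying in every `Hs l`, `l ≠ j`,
not commuting with `c j`. -/
private lemma aux_dual {G : Type*} [Group G] [Finite G] (p r : ℕ) [Fact p.Prime]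
    (H : Subgroup G) (hHcard : Nat.card H = p ^ r)
    (Hs : Fin r → Subgroup G) (hHsH : ∀ i, Hs i ≤ H)
    (hHsidx : ∀ i, (Hs i).relIndex H = p) (hindep : (⨅ i, Hs i) ⊓ H = ⊥)
    (c : Fin r → G)
    (hcC : ∀ i, c i ∈ Subgroup.centralizer ((Hs i : Subgroup G) : Set G))
    (hcH : ∀ i, c i ∉ Subgroup.centralizer (H : Set G)) :
    ∀ j : Fin r, ∃ h ∈ H, (∀ l, l ≠ j → h ∈ Hs l) ∧ ¬ Commute (c j) h := by
  intro j
  have hp : p.Prime := Fact.out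
  set B : Subgroup G := ⨅ l : {l : Fin r // l ≠ j}, Hs l with hB
  have hrel : B.relIndex H ≤ p ^ (r - 1) := by
    calc B.relIndex H ≤ ∏ l : {l : Fin r // l ≠ j}, (Hs l).relIndex H :=
          relIndex_iInf_le _
      _ = p ^ (r - 1) := by
          simp only [hHsidx, Finset.prod_const, Finset.card_univ]
          congr 1
          rw [Fintype.card_subtype_compl]
          simp
  have hcard : p ≤ Nat.card (B.subgroupOf H) := by
    have h1 : Nat.card (B.subgroupOf H) * (B.subgroupOf H).index = p ^ r := by
      rw [Subgroup.card_mul_index, hHcard]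
    have hidx : (B.subgroupOf H).index = B.relIndex H := rfl
    have hr : 1 ≤ r := Nat.one_le_iff_ne_zero.mpr (by rintro rfl; exact j.elim0)
    have hpow : p ^ r = p * p ^ (r - 1) := by
      rw [← pow_succ']; congr 1; omega
    by_contra hlt
    push_neg at hlt
    have : Nat.card (B.subgroupOf H) * (B.subgroupOf H).index
        ≤ Nat.card (B.subgroupOf H) * p ^ (r - 1) :=
      Nat.mul_le_mul_left _ (hidx ▸ hrel)
    have h2 : p * p ^ (r - 1) ≤ Nat.card (B.subgroupOf H) * p ^ (r-1) := by
      rw [← hpow, ← h1]; exact this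
    have := Nat.le_of_mul_le_mul_right h2 (pow_pos hp.pos _)
    omega
  have hnontriv : B.subgroupOf H ≠ ⊥ := by
    rw [← Subgroup.one_lt_card_iff_ne_bot]
    have := hp.two_le; omega
  obtain ⟨z, hz1⟩ := (Subgroup.nontrivial_iff_exists_ne_one _).mp
    ((Subgroup.bot_or_nontrivial _).resolve_left hnontriv)
  obtain ⟨x, hxB⟩ := z
  have hxB2 : x ∈ B := by
    have h := hz1.1
    rwa [Subgroup.mem_subgroupOf] at h
  refine ⟨(x : G), hxB, ?_, ?_⟩
  · intro l hl
    exact Subgroup.mem_iInf.mp hxB2 ⟨l, hl⟩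
  · have hxne : (x : G) ≠ 1 := by
      intro h
      exact hz1.2 (by ext; simpa using h)
    have hxnotin : (x : G) ∉ Hs j := by
      intro hmem
      have : (x : G) ∈ (⨅ l, Hs l) ⊓ H := by
        refine ⟨Subgroup.mem_iInf.mpr fun l => ?_, hxB⟩
        by_cases hl : l = j
        · exact hl ▸ hmem
        · exact Subgroup.mem_iInf.mp hxB2 ⟨l, hl⟩
      rw [hindep] at this
      exact hxne this
    intro hcomm
    set N : Subgroup G := Subgroup.centralizer {c j} ⊓ H with hN
    have hHsN : Hs j ≤ N := by
      intro y hy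
      refine Subgroup.mem_inf.mpr ⟨?_, hHsH j hy⟩
      rw [Subgroup.mem_centralizer_iff]
      rintro g rfl
      exact (Subgroup.mem_centralizer_iff.mp (hcC j) y hy).symm
    have hNH : N ≤ H := inf_le_right
    have hmul : (Hs j).relIndex N * N.relIndex H = p := by
      rw [Subgroup.relIndex_mul_relIndex _ _ _ hHsN hNH, hHsidx]
    have hdvd : N.relIndex H ∣ p := Dvd.intro_left _ hmul
    rcases (Nat.Prime.eq_one_or_self_of_dvd hp _ hdvd) with h1 | h1
    · have hHN : H ≤ N := Subgroup.relIndex_eq_one.mp h1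
      apply hcH j
      rw [Subgroup.mem_centralizer_iff]
      intro h hh
      have h2 := (Subgroup.mem_inf.mp (hHN hh)).1
      rw [Subgroup.mem_centralizer_iff] at h2
      exact (h2 (c j) rfl).symm
    · have h2 : (Hs j).relIndex N = 1 := by
        rw [h1] at hmul
        have hpz : p ≠ 0 := hp.pos.ne'
        exact mul_right_cancel₀ hpz (by rw [one_mul]; exact hmul)
      have hNHs : N ≤ Hs j := Subgroup.relIndex_eq_one.mp h2
      apply hxnotin
      apply hNHs
      refine Subgroup.mem_inf.mpr ⟨?_, hxB⟩
      rw [Subgroup.mem_centralizer_iff]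
      rintro g rfl
      exact hcomm.eq

/-- Let `G = K ⋊ H` with `H` elementary abelian of order `p^r`, `K` a `p'`-group, `H₁,…,H_r`
linearly independent hyperplanes of `H`, and let `cᵢ ∈ C_K(Hᵢ) \ C_K(H)` pairwise commute.
Let `S = { c^δ H (c^δ)⁻¹ : δ ∈ {0,1}^r }` where `c^δ = c₁^{δ₁}⋯c_r^{δ_r}`. Then for every
`i` and every `k ∈ K`, the number of members of `S` containing `k Hᵢ k⁻¹` is even. -/
theorem stmt16 {G : Type*} [Group G] [Finite G] (p r : ℕ) [Fact p.Prime]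
    (K H : Subgroup G) (hKn : K.Normal) (hdisj : K ⊓ H = ⊥) (hsup : K ⊔ H = ⊤)
    (hHcard : Nat.card H = p ^ r) (helem : ∀ x ∈ H, x ^ p = 1)
    (hHab : ∀ a ∈ H, ∀ b ∈ H, a * b = b * a)
    (hK' : ¬ p ∣ Nat.card K)
    (Hs : Fin r → Subgroup G) (hHsH : ∀ i, Hs i ≤ H)
    (hHsidx : ∀ i, (Hs i).relIndex H = p) (hindep : (⨅ i, Hs i) ⊓ H = ⊥)
    (c : Fin r → G) (hcK : ∀ i, c i ∈ K)
    (hcC : ∀ i, c i ∈ Subgroup.centralizer ((Hs i : Subgroup G) : Set G))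
    (hcH : ∀ i, c i ∉ Subgroup.centralizer (H : Set G))
    (hcomm : ∀ i j, Commute (c i) (c j)) :
    ∀ (i : Fin r) (k : G), k ∈ K →
      Even (Nat.card {P : Subgroup G //
        (∃ δ : Fin r → Bool,
          P = H.map (MulAut.conj
            ((List.ofFn fun j => if δ j then c j else 1).prod)).toMonoidHom) ∧
        (Hs i).map (MulAut.conj k).toMonoidHom ≤ P}) := by
  intro i k hk
  -- the product c^δ
  set q : (Fin r → Bool) → G := fun δ => (List.ofFn fun j => if δ j then c j else 1).prod
    with hqdef
  have hfc : ∀ δ : Fin r → Bool, ∀ a b : Fin r,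
      Commute (if δ a then c a else 1) (if δ b then c b else 1) := by
    intro δ a b
    split_ifs
    · exact hcomm a b
    · exact Commute.one_right _
    · exact Commute.one_left _
    · exact Commute.one_right _
  have hqK : ∀ δ, q δ ∈ K := by
    intro δ
    apply list_prod_mem
    intro x hx
    rw [List.mem_ofFn] at hx
    obtain ⟨j, rfl⟩ := hx
    split_ifs
    · exact hcK j
    · exact one_mem K
  have hcq : ∀ (j : Fin r) δ, Commute (c j) (q δ) := by
    intro j δ
    apply Commute.list_prod_right
    intro x hx
    rw [List.mem_ofFn] at hx
    obtain ⟨l, rfl⟩ := hx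
    split_ifs
    · exact hcomm j l
    · exact Commute.one_right _
  have hqh : ∀ (δ : Fin r → Bool) (h : G), (∀ l, δ l = true → Commute (c l) h) →
      Commute (q δ) h := by
    intro δ h hl
    apply Commute.list_prod_left
    intro x hx
    rw [List.mem_ofFn] at hx
    obtain ⟨l, rfl⟩ := hx
    split_ifs with hcase
    · exact hl l hcase
    · exact Commute.one_left _
  have hextract : ∀ (δ : Fin r → Bool) (j : Fin r),
      q δ = (if δ j then c j else 1) * q (Function.update δ j false) := by
    intro δ j
    have h := ofFn_extract (fun l => if δ l then c l else 1) (hfc δ) j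
    have h2 : Function.update (fun l => if δ l then c l else 1) j 1
        = fun l => if Function.update δ j false l then c l else 1 := by
      funext l
      by_cases hl : l = j
      · subst hl; simp
      · rw [Function.update_of_ne hl, Function.update_of_ne hl]
    rw [h2] at h
    exact h
  set C : Subgroup G := Subgroup.centralizer ((Hs i : Subgroup G) : Set G) with hC
  -- invariance of the condition under changing δ at i
  have hCond_any : ∀ (δ : Fin r → Bool) (b : Bool),
      ((q (Function.update δ i b))⁻¹ * k ∈ C) ↔ ((q δ)⁻¹ * k ∈ C) := by
    have flip : ∀ (δ : Fin r → Bool) (b : Bool),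
        ((q (Function.update δ i b))⁻¹ * k ∈ C) ↔
          ((q (Function.update δ i false))⁻¹ * k ∈ C) := by
      intro δ b
      have h1 : q (Function.update δ i b) =
          (if b then c i else 1) * q (Function.update δ i false) := by
        have h := hextract (Function.update δ i b) i
        rwa [Function.update_self, Function.update_idem] at h
      have hbC : (if b then c i else 1) ∈ C := by
        split_ifs
        · exact hcC i
        · exact one_mem C
      have hcomQ : Commute (if b then c i else 1) (q (Function.update δ i false)) := by
        split_ifs
        · exact hcq i _
        · exact Commute.one_left _
      have h2 : (q (Function.update δ i b))⁻¹ * k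
          = (if b then c i else 1)⁻¹ * ((q (Function.update δ i false))⁻¹ * k) := by
        rw [h1, mul_inv_rev, ← hcomQ.inv_inv.eq, mul_assoc]
      rw [h2]
      exact Subgroup.mul_mem_cancel_left C (C.inv_mem hbC)
    intro δ b
    rw [flip δ b]
    have h2 := flip δ (δ i)
    rw [Function.update_eq_self] at h2
    exact h2.symm
  -- injectivity of δ ↦ c^δ H c^{-δ}
  have hinj : ∀ δ ε : Fin r → Bool,
      H.map (MulAut.conj (q δ)).toMonoidHom = H.map (MulAut.conj (q ε)).toMonoidHom →
        δ = ε := by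
    intro δ ε hPeq
    have hwK : (q δ)⁻¹ * q ε ∈ K := K.mul_mem (K.inv_mem (hqK δ)) (hqK ε)
    have hwC : (q δ)⁻¹ * q ε ∈ Subgroup.centralizer (H : Set G) := by
      rw [Subgroup.mem_centralizer_iff]
      intro h hh
      have h1 : (MulAut.conj (q ε)).toMonoidHom h ∈ H.map (MulAut.conj (q δ)).toMonoidHom := by
        rw [hPeq]
        exact Subgroup.mem_map_of_mem _ hh
      rw [Subgroup.mem_map] at h1
      obtain ⟨h', hh', he⟩ := h1
      simp only [MulEquiv.coe_toMonoidHom, MulAut.conj_apply] at he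
      have hconj : ((q δ)⁻¹ * q ε) * h * ((q δ)⁻¹ * q ε)⁻¹ ∈ H := by
        have e1 : ((q δ)⁻¹ * q ε) * h * ((q δ)⁻¹ * q ε)⁻¹
            = (q δ)⁻¹ * (q ε * h * (q ε)⁻¹) * q δ := by group
        have e2 : (q δ)⁻¹ * (q δ * h' * (q δ)⁻¹) * q δ = h' := by group
        rw [e1, ← he, e2]
        exact hh'
      exact (aux_comm K H hKn hdisj hwK hh hconj).symm.eq
    funext j
    obtain ⟨h, hhH, hhl, hnc⟩ := aux_dual p r H hHcard Hs hHsH hHsidx hindep c hcC hcH j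
    have hQcom : ∀ θ : Fin r → Bool, Commute (q (Function.update θ j false)) h := by
      intro θ
      apply hqh
      intro l hl
      by_cases hlj : l = j
      · subst hlj; rw [Function.update_self] at hl; exact absurd hl (by simp)
      · rw [Function.update_of_ne hlj] at hl
        exact (Subgroup.mem_centralizer_iff.mp (hcC l) h (hhl l hlj)).symm
    have hwh : Commute ((q δ)⁻¹ * q ε) h :=
      (Subgroup.mem_centralizer_iff.mp hwC h hhH).symm
    have key : Commute ((if δ j then c j else 1)⁻¹ * (if ε j then c j else 1)) h := by
      have e : (if δ j then c j else 1)⁻¹ * (if ε j then c j else 1)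
          = q (Function.update δ j false) * ((q δ)⁻¹ * q ε)
            * (q (Function.update ε j false))⁻¹ := by
        rw [hextract δ j, hextract ε j]
        group
      rw [e]
      exact ((hQcom δ).mul_left hwh).mul_left (hQcom ε).inv_left
    by_cases hδj : δ j = true <;> by_cases hεj : ε j = true
    · rw [hδj, hεj]
    · exfalso
      apply hnc
      rw [hδj, eq_false_of_ne_true hεj] at key
      simp at key
      exact key
    · exfalso
      apply hnc
      rw [eq_false_of_ne_true hδj, hεj] at key
      simpa using key
    · rw [eq_false_of_ne_true hδj, eq_false_of_ne_true hεj]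
  -- the set of admissible δ
  set T : Type _ := {δ : Fin r → Bool // (q δ)⁻¹ * k ∈ C} with hT
  -- bijection with the subgroup count
  have hbij : Nat.card {P : Subgroup G //
      (∃ δ : Fin r → Bool,
        P = H.map (MulAut.conj
          ((List.ofFn fun j => if δ j then c j else 1).prod)).toMonoidHom) ∧
      (Hs i).map (MulAut.conj k).toMonoidHom ≤ P} = Nat.card T := by
    apply Nat.card_congr
    refine Equiv.symm (Equiv.ofBijective
      (fun t => ⟨H.map (MulAut.conj (q t.1)).toMonoidHom, ⟨t.1, rfl⟩,
        (aux_le_iff K H hKn hdisj (Hs i) (hHsH i) (hqK t.1) hk).mpr t.2⟩) ⟨?_, ?_⟩)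
    · intro t₁ t₂ h
      exact Subtype.ext (hinj t₁.1 t₂.1 (congrArg Subtype.val h))
    · rintro ⟨P, ⟨δ, rfl⟩, hle⟩
      exact ⟨⟨δ, (aux_le_iff K H hKn hdisj (Hs i) (hHsH i) (hqK δ) hk).mp hle⟩, rfl⟩
  rw [hbij]
  -- parity via the pairing δ ↦ flip δ at i
  set T₀ : Type _ := {δ : Fin r → Bool // ((q δ)⁻¹ * k ∈ C) ∧ δ i = false} with hT0
  have e2 : T ≃ T₀ × Bool := by
    refine ⟨fun t => (⟨Function.update t.1 i false,
        (hCond_any t.1 false).mpr t.2, Function.update_self _ _ _⟩, t.1 i),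
      fun s => ⟨Function.update s.1.1 i s.2, (hCond_any s.1.1 s.2).mpr s.1.2.1⟩, ?_, ?_⟩
    · intro t
      apply Subtype.ext
      simp only
      rw [Function.update_idem, Function.update_eq_self]
    · rintro ⟨⟨δ, hδc, hδi⟩, b⟩
      refine Prod.ext (Subtype.ext ?_) ?_
      · show Function.update (Function.update δ i b) i false = δ
        rw [Function.update_idem, ← hδi, Function.update_eq_self]
      · show Function.update δ i b i = b
        rw [Function.update_self]
  rw [Nat.card_congr e2, Nat.card_prod, Nat.card_eq_fintype_card (α := Bool)]
  simp only [Fintype.card_bool]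
  exact ⟨Nat.card T₀, by ring⟩
end
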